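/- arXiv:1903.03826 — 10 statements merged into one kernel-verified Lean document; each statement's English description precedes it below -/
import Mathlib

section
/- Let Q be a real 3×3 rotation matrix written in axis–angle (Rodrigues) form Q = I₃ + sin(θ)·v̂ + (1−cos(θ))·v̂² for some θ ∈ ℝ and unit vector v ∈ ℝ³, and let G be a real symmetric 3×3 matrix. Then ⟨G(I₃−Q), (I₃−Q)⟩ = 2·(tr(G) − vᵀGv)·(1−cos θ). -/
open Matrix Polynomial

noncomputable section

/-- The hat map sending `x ∈ ℝ³` to the skew-symmetric matrix `x̂` with `x̂ y = x × y`. -/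
def hat (x : Fin 3 → ℝ) : Matrix (Fin 3) (Fin 3) ℝ :=
  !![0, -x 2, x 1; x 2, 0, -x 0; -x 1, x 0, 0]

/-- The vee map, inverse of the hat map on skew-symmetric `3 × 3` matrices. -/
def vee (A : Matrix (Fin 3) (Fin 3) ℝ) : Fin 3 → ℝ :=
  ![A 2 1, A 0 2, A 1 0]

/-- `SO3 R` iff `R` is a rotation matrix: `RᵀR = I₃` and `det R = 1`. -/
def SO3 (R : Matrix (Fin 3) (Fin 3) ℝ) : Prop :=
  Rᵀ * R = 1 ∧ R.det = 1

/-- Frobenius inner product `⟨A,B⟩ = tr(AᵀB)`. -/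
def finner (A B : Matrix (Fin 3) (Fin 3) ℝ) : ℝ := (Aᵀ * B).trace

/-- Frobenius norm `‖A‖ = √⟨A,A⟩`. -/
def fnorm (A : Matrix (Fin 3) (Fin 3) ℝ) : ℝ := Real.sqrt (finner A A)

/-- Euclidean norm of a vector. -/
def vnorm {k : ℕ} (x : Fin k → ℝ) : ℝ := Real.sqrt (x ⬝ᵥ x)

/-- Third standard basis vector `e₃ = (0,0,1)` of `ℝ³`. -/
def e3 : Fin 3 → ℝ := ![0, 0, 1]

set_option maxHeartbeats 1000000 in
/-- for a rotation `Q` in Rodrigues (axis–angle) form with unit axis `v`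
and a symmetric `G`, `⟨G(I₃−Q), (I₃−Q)⟩ = 2 (tr G − vᵀGv)(1 − cos θ)`. -/
theorem stmt_0 (θ : ℝ) (v : Fin 3 → ℝ) (hv : v ⬝ᵥ v = 1)
    (G : Matrix (Fin 3) (Fin 3) ℝ) (hG : Gᵀ = G)
    (Q : Matrix (Fin 3) (Fin 3) ℝ)
    (hQ : Q = 1 + Real.sin θ • hat v + (1 - Real.cos θ) • (hat v * hat v)) :
    finner (G * (1 - Q)) (1 - Q) = 2 * (G.trace - v ⬝ᵥ G.mulVec v) * (1 - Real.cos θ) := by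
  have h01 : G 0 1 = G 1 0 := by conv_lhs => rw [← hG, Matrix.transpose_apply]
  have h02 : G 0 2 = G 2 0 := by conv_lhs => rw [← hG, Matrix.transpose_apply]
  have h12 : G 1 2 = G 2 1 := by conv_lhs => rw [← hG, Matrix.transpose_apply]
  have hp : Real.sin θ ^ 2 = 1 - Real.cos θ ^ 2 := by
    have := Real.sin_sq_add_cos_sq θ; nlinarith
  have hv' : v 0 ^ 2 + v 1 ^ 2 + v 2 ^ 2 = 1 := by
    simpa [dotProduct, Fin.sum_univ_three, sq] using hv
  subst hQ
  simp only [finner, hat, Matrix.trace, Matrix.mul_apply, Matrix.transpose_apply,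
    Fin.sum_univ_three, Matrix.diag_apply, Matrix.add_apply, Matrix.sub_apply,
    Matrix.smul_apply, Matrix.one_apply, Matrix.mulVec, dotProduct,
    Matrix.cons_val', Matrix.cons_val_zero, Matrix.cons_val_one, Matrix.head_cons,
    Matrix.empty_val', Matrix.cons_val_fin_one, Matrix.head_fin_const,
    Matrix.cons_val_two, Matrix.tail_cons, smul_eq_mul, Fin.isValue, Matrix.cons_val, Matrix.of_apply]
  norm_num [Fin.ext_iff]
  rw [h01, h02, h12]
  set s := Real.sin θ
  set c := Real.cos θ
  linear_combination
    (v 0 ^ 2 * (G 1 1 + G 2 2) + v 1 ^ 2 * (G 0 0 + G 2 2) + v 2 ^ 2 * (G 0 0 + G 1 1)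
      - 2 * (v 0 * v 1 * G 1 0 + v 0 * v 2 * G 2 0 + v 1 * v 2 * G 2 1)) * hp
    + (2 * (1 - c) * (G 0 0 + G 1 1 + G 2 2)
      + (1 - c) ^ 2 * (v 0 ^ 2 * (G 1 1 + G 2 2) + v 1 ^ 2 * (G 0 0 + G 2 2)
        + v 2 ^ 2 * (G 0 0 + G 1 1)
        - 2 * (v 0 * v 1 * G 1 0 + v 0 * v 2 * G 2 0 + v 1 * v 2 * G 2 1))) * hv'
end
end

section
/- For every R ∈ SO(3) there exist θ ∈ [0, 2π] and a unit vector v ∈ ℝ³ such that R = I₃ + sin(θ)·v̂ + (1−cos(θ))·v̂². -/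
open Matrix Polynomial

noncomputable section

private lemma rank1 (A E P B C F : ℝ) (hA : 0 < A) (hb : B^2 = A*E) (hc : C^2 = A*P)
    (hbc : B*C = F*A) (hsum : A + E + P = 2) :
    ∃ v : Fin 3 → ℝ, v ⬝ᵥ v = 1 ∧ 2*(v 0*v 0) = A ∧ 2*(v 1*v 1) = E ∧ 2*(v 2*v 2) = P ∧
      2*(v 0*v 1) = B ∧ 2*(v 0*v 2) = C ∧ 2*(v 1*v 2) = F := by
  have hqpos : 0 < Real.sqrt (A/2) := Real.sqrt_pos.mpr (by linarith)
  have hq2 : Real.sqrt (A/2)^2 = A/2 := Real.sq_sqrt (by linarith)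
  set q := Real.sqrt (A/2) with hqdef
  refine ⟨![q, B/(2*q), C/(2*q)], ?_, ?_, ?_, ?_, ?_, ?_, ?_⟩
  · simp only [dotProduct, Fin.sum_univ_three, Matrix.cons_val_zero, Matrix.cons_val_one,
      Matrix.head_cons, Matrix.cons_val_two, Matrix.tail_cons]
    field_simp
    linear_combination (4*q^2+2*A-4)*hq2 + hb + hc + A*hsum
  · simp only [Matrix.cons_val_zero]
    linear_combination 2*hq2
  · simp only [Matrix.cons_val_one, Matrix.head_cons, Matrix.cons_val_zero]
    field_simp
    linear_combination hb - 2*E*hq2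
  · simp only [Matrix.cons_val_two, Matrix.tail_cons, Matrix.head_cons]
    field_simp
    linear_combination hc - 2*P*hq2
  · simp only [Matrix.cons_val_zero, Matrix.cons_val_one, Matrix.head_cons]
    field_simp
  · simp only [Matrix.cons_val_zero, Matrix.cons_val_two, Matrix.tail_cons, Matrix.head_cons]
    field_simp
  · simp only [Matrix.cons_val_one, Matrix.cons_val_two, Matrix.tail_cons, Matrix.head_cons,
      Matrix.cons_val_zero]
    field_simp
    linear_combination hbc - 2*F*hq2


private lemma aux_le_one (x y z : ℝ) (h : x*x + y*y + z*z = 1) : x ≤ 1 := by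
  nlinarith [sq_nonneg (x-1), sq_nonneg y, sq_nonneg z]

private lemma aux_zero (x y z : ℝ) (h : x*x + y*y + z*z = 1) (hx : x = 1) : y = 0 := by
  subst hx
  refine mul_self_eq_zero.mp (le_antisymm ?_ (mul_self_nonneg _))
  nlinarith [mul_self_nonneg z]

private lemma aux_tm1 (T s1 s2 s3 : ℝ) (h : s1^2 + s2^2 + s3^2 = (3-T)*(1+T)) (h3 : T < 3) :
    -1 ≤ T := by
  nlinarith [sq_nonneg s1, sq_nonneg s2, sq_nonneg s3]

private lemma aux_sumsq0 (x y z : ℝ) (h : x^2 + y^2 + z^2 = 0) : x = 0 := by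
  refine pow_eq_zero_iff two_ne_zero |>.mp (le_antisymm ?_ (sq_nonneg _))
  nlinarith [sq_nonneg y, sq_nonneg z]

private lemma aux_h1c (T : ℝ) (h1 : -1 < T) (h2 : T < 3) : 0 < 1 - ((T-1)/2)^2 := by
  nlinarith

set_option maxHeartbeats 1000000 in
/-- every `R ∈ SO(3)` has a Rodrigues (axis–angle) representation with
`θ ∈ [0, 2π]` and a unit axis `v`. -/
theorem stmt_1 (R : Matrix (Fin 3) (Fin 3) ℝ) (hR : SO3 R) :
    ∃ θ ∈ Set.Icc (0 : ℝ) (2 * Real.pi), ∃ v : Fin 3 → ℝ, v ⬝ᵥ v = 1 ∧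
      R = 1 + Real.sin θ • hat v + (1 - Real.cos θ) • (hat v * hat v) := by
  obtain ⟨hO, hdet⟩ := hR
  have hO' : R * Rᵀ = 1 := mul_eq_one_comm.mp hO
  have hadj : R.adjugate = Rᵀ := by
    calc R.adjugate = R.adjugate * (R * Rᵀ) := by rw [hO', mul_one]
      _ = R.adjugate * R * Rᵀ := by rw [mul_assoc]
      _ = Rᵀ := by rw [Matrix.adjugate_mul, hdet, one_smul, one_mul]
  have hrow1 : R 0 0 * R 0 0 + R 0 1 * R 0 1 + R 0 2 * R 0 2 = 1 := by
    have := congrFun (congrFun hO' 0) 0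
    simp [Matrix.mul_apply, Fin.sum_univ_three, Matrix.one_apply] at this
    linear_combination this
  have hrow2 : R 1 0 * R 1 0 + R 1 1 * R 1 1 + R 1 2 * R 1 2 = 1 := by
    have := congrFun (congrFun hO' 1) 1
    simp [Matrix.mul_apply, Fin.sum_univ_three, Matrix.one_apply] at this
    linear_combination this
  have hrow3 : R 2 0 * R 2 0 + R 2 1 * R 2 1 + R 2 2 * R 2 2 = 1 := by
    have := congrFun (congrFun hO' 2) 2
    simp [Matrix.mul_apply, Fin.sum_univ_three, Matrix.one_apply] at this
    linear_combination this
  have hrow12 : R 0 0 * R 1 0 + R 0 1 * R 1 1 + R 0 2 * R 1 2 = 0 := by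
    have := congrFun (congrFun hO' 0) 1
    simp [Matrix.mul_apply, Fin.sum_univ_three, Matrix.one_apply] at this
    linear_combination this
  have hrow13 : R 0 0 * R 2 0 + R 0 1 * R 2 1 + R 0 2 * R 2 2 = 0 := by
    have := congrFun (congrFun hO' 0) 2
    simp [Matrix.mul_apply, Fin.sum_univ_three, Matrix.one_apply] at this
    linear_combination this
  have hrow23 : R 1 0 * R 2 0 + R 1 1 * R 2 1 + R 1 2 * R 2 2 = 0 := by
    have := congrFun (congrFun hO' 1) 2
    simp [Matrix.mul_apply, Fin.sum_univ_three, Matrix.one_apply] at this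
    linear_combination this
  have hcol1 : R 0 0 * R 0 0 + R 1 0 * R 1 0 + R 2 0 * R 2 0 = 1 := by
    have := congrFun (congrFun hO 0) 0
    simp [Matrix.mul_apply, Fin.sum_univ_three, Matrix.one_apply] at this
    linear_combination this
  have hcol2 : R 0 1 * R 0 1 + R 1 1 * R 1 1 + R 2 1 * R 2 1 = 1 := by
    have := congrFun (congrFun hO 1) 1
    simp [Matrix.mul_apply, Fin.sum_univ_three, Matrix.one_apply] at this
    linear_combination this
  have hcol3 : R 0 2 * R 0 2 + R 1 2 * R 1 2 + R 2 2 * R 2 2 = 1 := by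
    have := congrFun (congrFun hO 2) 2
    simp [Matrix.mul_apply, Fin.sum_univ_three, Matrix.one_apply] at this
    linear_combination this
  have hcol12 : R 0 0 * R 0 1 + R 1 0 * R 1 1 + R 2 0 * R 2 1 = 0 := by
    have := congrFun (congrFun hO 0) 1
    simp [Matrix.mul_apply, Fin.sum_univ_three, Matrix.one_apply] at this
    linear_combination this
  have hcol13 : R 0 0 * R 0 2 + R 1 0 * R 1 2 + R 2 0 * R 2 2 = 0 := by
    have := congrFun (congrFun hO 0) 2
    simp [Matrix.mul_apply, Fin.sum_univ_three, Matrix.one_apply] at this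
    linear_combination this
  have hcol23 : R 0 1 * R 0 2 + R 1 1 * R 1 2 + R 2 1 * R 2 2 = 0 := by
    have := congrFun (congrFun hO 1) 2
    simp [Matrix.mul_apply, Fin.sum_univ_three, Matrix.one_apply] at this
    linear_combination this
  have hca : (R 0 0) = (R 1 1)*(R 2 2) - (R 1 2)*(R 2 1) := by
    have := congrFun (congrFun hadj 0) 0
    rw [Matrix.adjugate_fin_three] at this
    simp [Matrix.transpose_apply] at this
    linear_combination -this
  have hcd : (R 1 0) = (R 0 2)*(R 2 1) - (R 0 1)*(R 2 2) := by
    have := congrFun (congrFun hadj 0) 1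
    rw [Matrix.adjugate_fin_three] at this
    simp [Matrix.transpose_apply] at this
    linear_combination -this
  have hcg : (R 2 0) = (R 0 1)*(R 1 2) - (R 0 2)*(R 1 1) := by
    have := congrFun (congrFun hadj 0) 2
    rw [Matrix.adjugate_fin_three] at this
    simp [Matrix.transpose_apply] at this
    linear_combination -this
  have hcb : (R 0 1) = (R 1 2)*(R 2 0) - (R 1 0)*(R 2 2) := by
    have := congrFun (congrFun hadj 1) 0
    rw [Matrix.adjugate_fin_three] at this
    simp [Matrix.transpose_apply] at this
    linear_combination -this
  have hce : (R 1 1) = (R 0 0)*(R 2 2) - (R 0 2)*(R 2 0) := by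
    have := congrFun (congrFun hadj 1) 1
    rw [Matrix.adjugate_fin_three] at this
    simp [Matrix.transpose_apply] at this
    linear_combination -this
  have hch : (R 2 1) = (R 0 2)*(R 1 0) - (R 0 0)*(R 1 2) := by
    have := congrFun (congrFun hadj 1) 2
    rw [Matrix.adjugate_fin_three] at this
    simp [Matrix.transpose_apply] at this
    linear_combination -this
  have hcc : (R 0 2) = (R 1 0)*(R 2 1) - (R 1 1)*(R 2 0) := by
    have := congrFun (congrFun hadj 2) 0
    rw [Matrix.adjugate_fin_three] at this
    simp [Matrix.transpose_apply] at this
    linear_combination -this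
  have hcf : (R 1 2) = (R 0 1)*(R 2 0) - (R 0 0)*(R 2 1) := by
    have := congrFun (congrFun hadj 2) 1
    rw [Matrix.adjugate_fin_three] at this
    simp [Matrix.transpose_apply] at this
    linear_combination -this
  have hcp : (R 2 2) = (R 0 0)*(R 1 1) - (R 0 1)*(R 1 0) := by
    have := congrFun (congrFun hadj 2) 2
    rw [Matrix.adjugate_fin_three] at this
    simp [Matrix.transpose_apply] at this
    linear_combination -this

  have hD0 : (2*(R 0 0) - ((R 0 0 + R 1 1 + R 2 2)-1))*((R 0 0 + R 1 1 + R 2 2)+1) = ((R 2 1)-(R 1 2))^2 := by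
    linear_combination 2*hca - hrow2 - hrow3 + hcol1
  have hD1 : (2*(R 1 1) - ((R 0 0 + R 1 1 + R 2 2)-1))*((R 0 0 + R 1 1 + R 2 2)+1) = ((R 0 2)-(R 2 0))^2 := by
    linear_combination 2*hce - hrow1 - hrow3 + hcol2
  have hD2 : (2*(R 2 2) - ((R 0 0 + R 1 1 + R 2 2)-1))*((R 0 0 + R 1 1 + R 2 2)+1) = ((R 1 0)-(R 0 1))^2 := by
    linear_combination 2*hcp - hrow1 - hrow2 + hcol3
  have hS01 : ((R 0 1)+(R 1 0))*((R 0 0 + R 1 1 + R 2 2)+1) = ((R 2 1)-(R 1 2))*((R 0 2)-(R 2 0)) := by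
    linear_combination hcb + hcd + hcol12 + hrow12
  have hS02 : ((R 0 2)+(R 2 0))*((R 0 0 + R 1 1 + R 2 2)+1) = ((R 2 1)-(R 1 2))*((R 1 0)-(R 0 1)) := by
    linear_combination hcc + hcg + hcol13 + hrow13
  have hS12 : ((R 1 2)+(R 2 1))*((R 0 0 + R 1 1 + R 2 2)+1) = ((R 0 2)-(R 2 0))*((R 1 0)-(R 0 1)) := by
    linear_combination hcf + hch + hcol23 + hrow23
  have hN : ((R 2 1)-(R 1 2))^2 + ((R 0 2)-(R 2 0))^2 + ((R 1 0)-(R 0 1))^2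
      = (3 - (R 0 0 + R 1 1 + R 2 2))*(1 + (R 0 0 + R 1 1 + R 2 2)) := by
    linear_combination -hD0 - hD1 - hD2
  have ha1 : (R 0 0) ≤ 1 := aux_le_one _ _ _ hrow1
  have he1 : (R 1 1) ≤ 1 := aux_le_one (R 1 1) (R 1 0) (R 1 2) (by linarith [hrow2])
  have hp1 : (R 2 2) ≤ 1 := aux_le_one (R 2 2) (R 2 0) (R 2 1) (by linarith [hrow3])
  by_cases h3 : (R 0 0 + R 1 1 + R 2 2) = 3
  · -- R = 1, take θ = 0, v = e3
    have hA : (R 0 0) = 1 := by linarith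
    have hE : (R 1 1) = 1 := by linarith
    have hP : (R 2 2) = 1 := by linarith
    have hb0 : (R 0 1) = 0 := aux_zero _ _ _ hrow1 hA
    have hc0 : (R 0 2) = 0 := aux_zero (R 0 0) (R 0 2) (R 0 1) (by linarith [hrow1]) hA
    have hd0 : (R 1 0) = 0 := aux_zero (R 1 1) (R 1 0) (R 1 2) (by linarith [hrow2]) hE
    have hf0 : (R 1 2) = 0 := aux_zero (R 1 1) (R 1 2) (R 1 0) (by linarith [hrow2]) hE
    have hg0 : (R 2 0) = 0 := aux_zero (R 2 2) (R 2 0) (R 2 1) (by linarith [hrow3]) hP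
    have hh0 : (R 2 1) = 0 := aux_zero (R 2 2) (R 2 1) (R 2 0) (by linarith [hrow3]) hP
    refine ⟨0, ⟨le_refl 0, by positivity⟩, e3, by norm_num [e3, dotProduct, Fin.sum_univ_three, Matrix.cons_val_two, Matrix.tail_cons, Matrix.head_cons], ?_⟩
    ext i j
    fin_cases i <;> fin_cases j <;>
      simp [hat, e3, Matrix.mul_apply, Fin.sum_univ_three, Matrix.one_apply] <;>
      linarith
  · have ht3 : (R 0 0 + R 1 1 + R 2 2) < 3 := lt_of_le_of_ne (by linarith) h3
    have ht1 : -1 ≤ (R 0 0 + R 1 1 + R 2 2) := aux_tm1 _ _ _ _ hN ht3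
    by_cases htm1 : (R 0 0 + R 1 1 + R 2 2) = -1
    · -- θ = π
      have hsumsq : ((R 2 1)-(R 1 2))^2 + ((R 0 2)-(R 2 0))^2 + ((R 1 0)-(R 0 1))^2 = 0 := by
        rw [hN, htm1]; ring
      have hsf : (R 2 1) = (R 1 2) := by
        have := aux_sumsq0 ((R 2 1)-(R 1 2)) ((R 0 2)-(R 2 0)) ((R 1 0)-(R 0 1)) hsumsq
        linarith
      have hsc : (R 2 0) = (R 0 2) := by
        have := aux_sumsq0 ((R 0 2)-(R 2 0)) ((R 2 1)-(R 1 2)) ((R 1 0)-(R 0 1)) (by linarith [hsumsq])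
        linarith
      have hsb : (R 1 0) = (R 0 1) := by
        have := aux_sumsq0 ((R 1 0)-(R 0 1)) ((R 0 2)-(R 2 0)) ((R 2 1)-(R 1 2)) (by linarith [hsumsq])
        linarith
      have hq1 : (R 0 1)^2 = ((R 0 0)+1)*((R 1 1)+1) := by
        linear_combination hcp - (R 0 1)*hsb - htm1
      have hq2 : (R 0 2)^2 = ((R 0 0)+1)*((R 2 2)+1) := by
        linear_combination hce - (R 0 2)*hsc - htm1
      have hq3 : (R 1 2)^2 = ((R 1 1)+1)*((R 2 2)+1) := by
        linear_combination hca - (R 1 2)*hsf - htm1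
      have hq4 : (R 0 1)*(R 0 2) = (R 1 2)*((R 0 0)+1) := by
        linear_combination -hcf - (R 0 1)*hsc + (R 0 0)*hsf
      have hq5 : (R 0 1)*(R 1 2) = (R 0 2)*((R 1 1)+1) := by
        linear_combination -hcc + (R 1 1)*hsc - (R 2 1)*hsb - (R 0 1)*hsf
      have hq6 : (R 0 2)*(R 1 2) = (R 0 1)*((R 2 2)+1) := by
        linear_combination -hcb - (R 1 2)*hsc + (R 2 2)*hsb
      have tail : ∀ v : Fin 3 → ℝ, v ⬝ᵥ v = 1 → 2*(v 0*v 0) = (R 0 0) + 1 →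
          2*(v 1*v 1) = (R 1 1) + 1 → 2*(v 2*v 2) = (R 2 2) + 1 →
          2*(v 0*v 1) = (R 0 1) → 2*(v 0*v 2) = (R 0 2) → 2*(v 1*v 2) = (R 1 2) →
          ∃ θ ∈ Set.Icc (0 : ℝ) (2 * Real.pi), ∃ v : Fin 3 → ℝ, v ⬝ᵥ v = 1 ∧
            R = 1 + Real.sin θ • hat v + (1 - Real.cos θ) • (hat v * hat v) := by
        intro v hv h00 h11 h22 h01 h02 h12
        refine ⟨Real.pi, ⟨Real.pi_pos.le, by linarith [Real.pi_pos]⟩, v, hv, ?_⟩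
        ext i j
        fin_cases i <;> fin_cases j <;>
          simp [hat, Matrix.mul_apply, Fin.sum_univ_three, Matrix.one_apply]
        · linear_combination h11 + h22 + htm1
        · linear_combination -h01
        · linear_combination -h02
        · linear_combination hsb - h01
        · linear_combination h00 + h22 + htm1
        · linear_combination -h12
        · linear_combination hsc - h02
        · linear_combination hsf - h12
        · linear_combination h00 + h11 + htm1
      by_cases hA0 : 0 < (R 0 0) + 1
      · obtain ⟨v, hv, h00, h11, h22, h01, h02, h12⟩ :=
          rank1 ((R 0 0)+1) ((R 1 1)+1) ((R 2 2)+1) (R 0 1) (R 0 2) (R 1 2) hA0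
            (by linear_combination hq1) (by linear_combination hq2) (by linear_combination hq4)
            (by linarith)
        exact tail v hv h00 h11 h22 h01 h02 h12
      · by_cases hE0 : 0 < (R 1 1) + 1
        · obtain ⟨w, hw, h00, h11, h22, h01, h02, h12⟩ :=
            rank1 ((R 1 1)+1) ((R 0 0)+1) ((R 2 2)+1) (R 0 1) (R 1 2) (R 0 2) hE0
              (by linear_combination hq1) (by linear_combination hq3) (by linear_combination hq5)
              (by linarith)
          refine tail ![w 1, w 0, w 2] ?_ ?_ ?_ ?_ ?_ ?_ ?_ <;>
            simp only [dotProduct, Fin.sum_univ_three, Matrix.cons_val_zero, Matrix.cons_val_one,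
              Matrix.head_cons, Matrix.cons_val_two, Matrix.tail_cons] at hw ⊢ <;>
            linarith [h00, h11, h22, h01, h02, h12, hw]
        · have hP0 : 0 < (R 2 2) + 1 := by linarith
          obtain ⟨w, hw, h00, h11, h22, h01, h02, h12⟩ :=
            rank1 ((R 2 2)+1) ((R 0 0)+1) ((R 1 1)+1) (R 0 2) (R 1 2) (R 0 1) hP0
              (by linear_combination hq2) (by linear_combination hq3) (by linear_combination hq6)
              (by linarith)
          refine tail ![w 1, w 2, w 0] ?_ ?_ ?_ ?_ ?_ ?_ ?_ <;>
            simp only [dotProduct, Fin.sum_univ_three, Matrix.cons_val_zero, Matrix.cons_val_one,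
              Matrix.head_cons, Matrix.cons_val_two, Matrix.tail_cons] at hw ⊢ <;>
            linarith [h00, h11, h22, h01, h02, h12, hw]
    · -- generic case: -1 < T < 3
      have ht1' : -1 < (R 0 0 + R 1 1 + R 2 2) := lt_of_le_of_ne ht1 (fun hh => htm1 hh.symm)
      set θ := Real.arccos (((R 0 0 + R 1 1 + R 2 2)-1)/2) with hθdef
      have hcos : Real.cos θ = ((R 0 0 + R 1 1 + R 2 2)-1)/2 := Real.cos_arccos (by linarith) (by linarith)
      have h1c : 0 < 1 - (((R 0 0 + R 1 1 + R 2 2)-1)/2)^2 := aux_h1c _ ht1' ht3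
      have hsin : Real.sin θ = Real.sqrt (1 - (((R 0 0 + R 1 1 + R 2 2)-1)/2)^2) := Real.sin_arccos _
      have hspos : 0 < Real.sin θ := by rw [hsin]; exact Real.sqrt_pos.mpr h1c
      have hsin2 : Real.sin θ^2 = 1 - (((R 0 0 + R 1 1 + R 2 2)-1)/2)^2 := by
        rw [hsin]; exact Real.sq_sqrt h1c.le
      have hs4 : 4*Real.sin θ^2 = (3 - (R 0 0 + R 1 1 + R 2 2))*(1 + (R 0 0 + R 1 1 + R 2 2)) := by linear_combination 4*hsin2
      set z := (2*Real.sin θ)⁻¹ with hzdef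
      have hz : 2*Real.sin θ*z = 1 := by
        rw [hzdef]; field_simp
      refine ⟨θ, ⟨Real.arccos_nonneg _, by linarith [Real.arccos_le_pi (((R 0 0 + R 1 1 + R 2 2)-1)/2), Real.pi_pos]⟩,
        ![((R 2 1)-(R 1 2))*z, ((R 0 2)-(R 2 0))*z, ((R 1 0)-(R 0 1))*z], ?_, ?_⟩
      · simp only [dotProduct, Fin.sum_univ_three, Matrix.cons_val_zero, Matrix.cons_val_one,
          Matrix.head_cons, Matrix.cons_val_two, Matrix.tail_cons]
        linear_combination z^2*hN - z^2*hs4 + (2*Real.sin θ*z+1)*hz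
      · ext i j
        fin_cases i <;> fin_cases j <;>
          (simp [hat, Matrix.mul_apply, Fin.sum_univ_three, Matrix.one_apply]; rw [hcos])
        · linear_combination (-(3-(R 0 0 + R 1 1 + R 2 2))/2*z^2)*(hD1+hD2) - (1-(R 0 0))*z^2*hs4 + (1-(R 0 0))*(2*Real.sin θ*z+1)*hz
        · linear_combination ((3-(R 0 0 + R 1 1 + R 2 2))/2*z^2)*hS01 + ((R 0 1)+(R 1 0))/2*z^2*hs4 - ((R 0 1)+(R 1 0))/2*(2*Real.sin θ*z+1)*hz + ((R 1 0)-(R 0 1))/2*hz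
        · linear_combination ((3-(R 0 0 + R 1 1 + R 2 2))/2*z^2)*hS02 + ((R 0 2)+(R 2 0))/2*z^2*hs4 - ((R 0 2)+(R 2 0))/2*(2*Real.sin θ*z+1)*hz - ((R 0 2)-(R 2 0))/2*hz
        · linear_combination ((3-(R 0 0 + R 1 1 + R 2 2))/2*z^2)*hS01 + ((R 0 1)+(R 1 0))/2*z^2*hs4 - ((R 0 1)+(R 1 0))/2*(2*Real.sin θ*z+1)*hz - ((R 1 0)-(R 0 1))/2*hz
        · linear_combination (-(3-(R 0 0 + R 1 1 + R 2 2))/2*z^2)*(hD0+hD2) - (1-(R 1 1))*z^2*hs4 + (1-(R 1 1))*(2*Real.sin θ*z+1)*hz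
        · linear_combination ((3-(R 0 0 + R 1 1 + R 2 2))/2*z^2)*hS12 + ((R 1 2)+(R 2 1))/2*z^2*hs4 - ((R 1 2)+(R 2 1))/2*(2*Real.sin θ*z+1)*hz + ((R 2 1)-(R 1 2))/2*hz
        · linear_combination ((3-(R 0 0 + R 1 1 + R 2 2))/2*z^2)*hS02 + ((R 0 2)+(R 2 0))/2*z^2*hs4 - ((R 0 2)+(R 2 0))/2*(2*Real.sin θ*z+1)*hz + ((R 0 2)-(R 2 0))/2*hz
        · linear_combination ((3-(R 0 0 + R 1 1 + R 2 2))/2*z^2)*hS12 + ((R 1 2)+(R 2 1))/2*z^2*hs4 - ((R 1 2)+(R 2 1))/2*(2*Real.sin θ*z+1)*hz - ((R 2 1)-(R 1 2))/2*hz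
        · linear_combination (-(3-(R 0 0 + R 1 1 + R 2 2))/2*z^2)*(hD0+hD1) - (1-(R 2 2))*z^2*hs4 + (1-(R 2 2))*(2*Real.sin θ*z+1)*hz
end
end

section
/- Let G be a real symmetric 3×3 matrix and R, R̄ ∈ SO(3). Define Ψ(R̄) = ½⟨G(R − R̄), (R − R̄)⟩ and the attitude error vector e_R = (RᵀGR̄ − R̄ᵀGR)^∨. Then for every η ∈ ℝ³, the derivative at s = 0 of the function s ↦ ½⟨G(R − R̄·exp(s·η̂)), (R − R̄·exp(s·η̂))⟩ equals ⟨e_R, η⟩ (the Euclidean inner product of e_R and η). -/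
open Matrix Polynomial

noncomputable section

attribute [local instance] Matrix.linftyOpNormedRing Matrix.linftyOpNormedAlgebra

/-- Transpose as a continuous linear map. -/
noncomputable def trp : Matrix (Fin 3) (Fin 3) ℝ →L[ℝ] Matrix (Fin 3) (Fin 3) ℝ :=
  LinearMap.toContinuousLinearMap ((Matrix.transposeLinearEquiv (Fin 3) (Fin 3) ℝ ℝ).toLinearMap)

/-- Trace as a continuous linear map. -/
noncomputable def trc : Matrix (Fin 3) (Fin 3) ℝ →L[ℝ] ℝ :=
  LinearMap.toContinuousLinearMap (Matrix.traceLinearMap (Fin 3) ℝ ℝ)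

lemma trace_mul_hat (B : Matrix (Fin 3) (Fin 3) ℝ) (x : Fin 3 → ℝ) :
    (B * hat x).trace = -(vee (B - Bᵀ) ⬝ᵥ x) := by
  simp [Matrix.trace_fin_three, Matrix.mul_apply, Fin.sum_univ_succ, hat, vee,
    dotProduct, Matrix.sub_apply, Matrix.transpose_apply]
  ring

/-- the derivative of `Ψ` with respect to the estimate `Rbar` along
`δRbar = Rbar η̂`, i.e. the derivative at `s = 0` of
`s ↦ ½⟨G(R − Rbar exp(s η̂)), (R − Rbar exp(s η̂))⟩`, equals `⟨e_R, η⟩`. -/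
theorem stmt_4 (G : Matrix (Fin 3) (Fin 3) ℝ) (hG : Gᵀ = G)
    (R Rbar : Matrix (Fin 3) (Fin 3) ℝ) (hR : SO3 R) (hRbar : SO3 Rbar)
    (eR : Fin 3 → ℝ) (heR : eR = vee (Rᵀ * G * Rbar - Rbarᵀ * G * R)) (η : Fin 3 → ℝ) :
    HasDerivAt
      (fun s : ℝ =>
        (1 / 2) * finner (G * (R - Rbar * NormedSpace.exp (s • hat η)))
          (R - Rbar * NormedSpace.exp (s • hat η)))
      (eR ⬝ᵥ η) 0 := by
  classical
  set A := hat η with hA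
  set M : ℝ → Matrix (Fin 3) (Fin 3) ℝ := fun s => R - Rbar * NormedSpace.exp (s • A) with hMdef
  have hE : HasDerivAt (fun s : ℝ => NormedSpace.exp (s • A)) A 0 := by
    have h := hasDerivAt_exp_smul_const (𝕂 := ℝ) A 0
    simp at h
    exact h
  have hM : HasDerivAt M (-(Rbar * A)) 0 := by
    have h := (hasDerivAt_const (0:ℝ) R).sub (hE.const_mul Rbar)
    simp at h
    exact h
  have hM0 : M 0 = R - Rbar := by
    simp [hMdef, NormedSpace.exp_zero]
  have hMT : HasDerivAt (fun s => (M s)ᵀ) (-(Rbar * A))ᵀ 0 := by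
    have := trp.hasFDerivAt.comp_hasDerivAt 0 hM
    exact this
  have hGM : HasDerivAt (fun s => Gᵀ * M s) (Gᵀ * -(Rbar * A)) 0 := hM.const_mul Gᵀ
  have hP : HasDerivAt (fun s => (M s)ᵀ * (Gᵀ * M s))
      ((-(Rbar * A))ᵀ * (Gᵀ * M 0) + (M 0)ᵀ * (Gᵀ * -(Rbar * A))) 0 := hMT.mul hGM
  have hT : HasDerivAt (fun s => ((M s)ᵀ * (Gᵀ * M s)).trace)
      ((( -(Rbar * A))ᵀ * (Gᵀ * M 0) + (M 0)ᵀ * (Gᵀ * -(Rbar * A))).trace) 0 := by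
    have := trc.hasFDerivAt.comp_hasDerivAt 0 hP
    exact this
  have hfin : HasDerivAt (fun s => (1/2 : ℝ) * ((M s)ᵀ * (Gᵀ * M s)).trace)
      ((1/2 : ℝ) * (((-(Rbar * A))ᵀ * (Gᵀ * M 0) + (M 0)ᵀ * (Gᵀ * -(Rbar * A))).trace)) 0 :=
    hT.const_mul (1/2)
  have hfun : (fun s : ℝ =>
        (1 / 2) * finner (G * (R - Rbar * NormedSpace.exp (s • hat η)))
          (R - Rbar * NormedSpace.exp (s • hat η)))
      = (fun s => (1/2 : ℝ) * ((M s)ᵀ * (Gᵀ * M s)).trace) := by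
    funext s
    simp only [finner, hMdef, Matrix.transpose_mul, Matrix.mul_assoc, hA]
  rw [hfun]
  have hsym : ((-(Rbar * A))ᵀ * (Gᵀ * M 0)).trace = ((M 0)ᵀ * (Gᵀ * -(Rbar * A))).trace := by
    rw [← Matrix.trace_transpose]
    simp only [Matrix.transpose_mul, Matrix.transpose_transpose, hG]
    rw [Matrix.mul_assoc]
  have hval : ((1/2 : ℝ) * (((-(Rbar * A))ᵀ * (Gᵀ * M 0) + (M 0)ᵀ * (Gᵀ * -(Rbar * A))).trace))
      = eR ⬝ᵥ η := by
    rw [Matrix.trace_add, hsym]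
    have : ((M 0)ᵀ * (Gᵀ * -(Rbar * A))).trace
        = -((((R - Rbar)ᵀ * G * Rbar) * A).trace) := by
      rw [hM0, hG]
      simp only [Matrix.mul_neg, Matrix.trace_neg, Matrix.mul_assoc]
    rw [this, hA, trace_mul_hat]
    have hB : ((R - Rbar)ᵀ * G * Rbar) - ((R - Rbar)ᵀ * G * Rbar)ᵀ
        = Rᵀ * G * Rbar - Rbarᵀ * G * R := by
      simp only [Matrix.transpose_mul, Matrix.transpose_sub, Matrix.transpose_transpose, hG,
        Matrix.sub_mul, Matrix.mul_sub]
      noncomm_ring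
    rw [hB, ← heR]
    ring
  rw [← hval]
  exact hfin
end
end

section
/- Let G be a real symmetric positive-semidefinite 3×3 matrix with eigenvalues λ₁ ≤ λ₂ ≤ λ₃, and let R, R̄ ∈ SO(3). Then, with E_R = R − R̄ and Ψ = ½⟨G·E_R, E_R⟩, one has (λ₁+λ₂)/4 · ‖E_R‖² ≤ Ψ ≤ (λ₂+λ₃)/4 · ‖E_R‖². -/
open Matrix Polynomial

noncomputable section

/-- Auxiliary: 3×3 adjugate identity `adj A = A² - (tr A) A + (tr adj A) I`. -/
lemma adj3_identity (A : Matrix (Fin 3) (Fin 3) ℝ) :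
    A.adjugate = A * A - A.trace • A + (A.adjugate).trace • (1 : Matrix (Fin 3) (Fin 3) ℝ) := by
  rw [Matrix.adjugate_fin_three]
  ext i j
  fin_cases i <;> fin_cases j <;>
    simp [Matrix.mul_apply, Fin.sum_univ_three, Matrix.trace_fin_three, Matrix.one_apply,
      Matrix.adjugate_fin_three] <;> ring

/-- Auxiliary: evaluation of the characteristic polynomial. -/
lemma eval_charpoly3 (M : Matrix (Fin 3) (Fin 3) ℝ) (r : ℝ) :
    M.charpoly.eval r = (r • (1 : Matrix (Fin 3) (Fin 3) ℝ) - M).det := by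
  rw [Matrix.charpoly, eval_det, matPolyEquiv_charmatrix]
  simp only [eval_sub, eval_X, eval_C, Matrix.scalar, Matrix.smul_one_eq_diagonal]
  congr 2

set_option maxHeartbeats 1000000 in
/-- for a symmetric PSD `G` with eigenvalues `l1 ≤ l2 ≤ l3` and
`R, Rbar ∈ SO(3)`, with `E_R = R − Rbar` and `Ψ = ½⟨G E_R, E_R⟩`,
`(l1+l2)/4 ‖E_R‖² ≤ Ψ ≤ (l2+l3)/4 ‖E_R‖²`. -/
theorem stmt_5 (G : Matrix (Fin 3) (Fin 3) ℝ) (hG : G.PosSemidef)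
    (l1 l2 l3 : ℝ) (h12 : l1 ≤ l2) (h23 : l2 ≤ l3)
    (hchar : G.charpoly = (X - C l1) * (X - C l2) * (X - C l3))
    (R Rbar : Matrix (Fin 3) (Fin 3) ℝ) (hR : SO3 R) (hRbar : SO3 Rbar) :
    (l1 + l2) / 4 * fnorm (R - Rbar) ^ 2 ≤ (1 / 2) * finner (G * (R - Rbar)) (R - Rbar) ∧
    (1 / 2) * finner (G * (R - Rbar)) (R - Rbar) ≤ (l2 + l3) / 4 * fnorm (R - Rbar) ^ 2 := by
  obtain ⟨hR1, hR2⟩ := hR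
  obtain ⟨hRb1, hRb2⟩ := hRbar
  set E : Matrix (Fin 3) (Fin 3) ℝ := R - Rbar with hE
  set Q : Matrix (Fin 3) (Fin 3) ℝ := R * Rbarᵀ with hQdef
  set S : Matrix (Fin 3) (Fin 3) ℝ := E * Eᵀ with hSdef
  have hRR : R * Rᵀ = 1 := mul_eq_one_comm.mp hR1
  have hRbRb : Rbar * Rbarᵀ = 1 := mul_eq_one_comm.mp hRb1
  have hQQt : Q * Qᵀ = 1 := by
    rw [hQdef, Matrix.transpose_mul, Matrix.transpose_transpose]
    calc R * Rbarᵀ * (Rbar * Rᵀ) = R * (Rbarᵀ * Rbar) * Rᵀ := by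
          rw [Matrix.mul_assoc, Matrix.mul_assoc, Matrix.mul_assoc]
      _ = 1 := by rw [hRb1, Matrix.mul_one, hRR]
  have hQtQ : Qᵀ * Q = 1 := mul_eq_one_comm.mp hQQt
  have hdetQ : Q.det = 1 := by
    rw [hQdef, Matrix.det_mul, Matrix.det_transpose, hR2, hRb2, one_mul]
  have hadj : Q.adjugate = Qᵀ := by
    calc Q.adjugate = (Qᵀ * Q) * Q.adjugate := by rw [hQtQ, Matrix.one_mul]
      _ = Qᵀ * (Q * Q.adjugate) := by rw [Matrix.mul_assoc]
      _ = Qᵀ := by rw [Matrix.mul_adjugate, hdetQ, one_smul, Matrix.mul_one]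
  set t : ℝ := Q.trace with ht
  have hCH : Q * Q = t • Q - t • (1 : Matrix (Fin 3) (Fin 3) ℝ) + Qᵀ := by
    have h := adj3_identity Q
    rw [hadj, Matrix.trace_transpose, ← ht] at h
    rw [h]; abel
  have hCHt : Qᵀ * Qᵀ = t • Qᵀ - t • (1 : Matrix (Fin 3) (Fin 3) ℝ) + Q := by
    have h := congrArg Matrix.transpose hCH
    simpa [Matrix.transpose_mul, Matrix.transpose_smul, Matrix.transpose_add,
      Matrix.transpose_sub, Matrix.transpose_one] using h
  have hS : S = (2 : ℝ) • (1 : Matrix (Fin 3) (Fin 3) ℝ) - Q - Qᵀ := by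
    have hQt : Qᵀ = Rbar * Rᵀ := by
      rw [hQdef, Matrix.transpose_mul, Matrix.transpose_transpose]
    rw [hSdef, hE, Matrix.transpose_sub, Matrix.mul_sub, Matrix.sub_mul, Matrix.sub_mul,
      hRR, hRbRb, hQdef, hQt]
    module
  have hS2 : S * S = (3 - t) • S := by
    rw [hS]
    simp only [Matrix.sub_mul, Matrix.mul_sub, smul_mul_assoc, mul_smul_comm,
      Matrix.one_mul, Matrix.mul_one, hQQt, hQtQ, hCH, hCHt]
    module
  have hSpsd : S.PosSemidef := by
    have h := Matrix.posSemidef_self_mul_conjTranspose E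
    rwa [Matrix.conjTranspose_eq_transpose_of_trivial, ← hSdef] at h
  -- spectral data of G
  have hGH : G.IsHermitian := hG.1
  set e : Fin 3 → ℝ := hGH.eigenvalues with hev
  set U : Matrix (Fin 3) (Fin 3) ℝ := (hGH.eigenvectorUnitary : Matrix (Fin 3) (Fin 3) ℝ)
    with hU
  have hUmem := hGH.eigenvectorUnitary.2
  have hUU : U * star U = 1 := Matrix.mem_unitaryGroup_iff.mp hUmem
  have hUU' : star U * U = 1 := Matrix.mem_unitaryGroup_iff'.mp hUmem
  have hspec : G = U * Matrix.diagonal e * star U := by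
    have h := hGH.spectral_theorem
    simpa using h
  set T : Matrix (Fin 3) (Fin 3) ℝ := star U * S * U with hT
  have hTpsd : T.PosSemidef := by
    have := hSpsd.conjTranspose_mul_mul_same U
    rwa [← Matrix.star_eq_conjTranspose] at this
  have hTsymm : ∀ i j, T j i = T i j := by
    intro i j
    have h := congrFun (congrFun hTpsd.1 i) j
    simpa [Matrix.conjTranspose_apply] using h
  have hTdiag_nonneg : ∀ i, 0 ≤ T i i := by
    intro i
    have h := hTpsd.dotProduct_mulVec_nonneg (Pi.single i 1)
    fin_cases i <;>
      simpa [dotProduct, Matrix.mulVec, Fin.sum_univ_three] using h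
  have htrT : T.trace = S.trace := by
    rw [hT, Matrix.trace_mul_cycle, ← Matrix.mul_assoc, hUU, Matrix.one_mul]
  have htrS : S.trace = 2 * (3 - t) := by
    rw [hS]
    simp [Matrix.trace_sub, Matrix.trace_smul, Matrix.trace_one, Matrix.trace_transpose, ← ht]
    ring
  have hmu_nonneg : (0:ℝ) ≤ 3 - t := by
    have h : 0 ≤ S.trace := by
      have h0 := hSpsd.dotProduct_mulVec_nonneg (Pi.single 0 1)
      have h1 := hSpsd.dotProduct_mulVec_nonneg (Pi.single 1 1)
      have h2 := hSpsd.dotProduct_mulVec_nonneg (Pi.single 2 1)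
      simp [dotProduct, Matrix.mulVec, Fin.sum_univ_three] at h0 h1 h2
      rw [Matrix.trace_fin_three]
      linarith
    linarith [htrS ▸ h]
  have hTsq : T * T = (3 - t) • T := by
    rw [hT]
    calc star U * S * U * (star U * S * U)
        = star U * S * (U * star U) * S * U := by
          simp only [Matrix.mul_assoc]
      _ = star U * (S * S) * U := by rw [hUU]; simp only [Matrix.mul_assoc, Matrix.one_mul]
      _ = (3 - t) • (star U * S * U) := by
          rw [hS2]; simp only [Matrix.mul_smul, Matrix.smul_mul]
  have hTdiag_le : ∀ i, T i i ≤ 3 - t := by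
    intro i
    have hsq := congrFun (congrFun hTsq i) i
    rw [Matrix.mul_apply, Matrix.smul_apply, smul_eq_mul] at hsq
    have hgesq : T i i * T i i ≤ ∑ j, T i j * T j i := by
      have hnn : ∀ j, 0 ≤ T i j * T j i := fun j => by
        rw [hTsymm i j]; exact mul_self_nonneg _
      simpa [hTsymm i i] using
        Finset.single_le_sum (fun j _ => hnn j) (Finset.mem_univ i)
    nlinarith [hTdiag_nonneg i, hmu_nonneg, hsq, hgesq]
  -- eigenvalue bounds
  have heig_bound : ∀ i, l1 ≤ e i ∧ e i ≤ l3 := by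
    intro i
    have hveq : (e i • (1 : Matrix (Fin 3) (Fin 3) ℝ) - G) *ᵥ ⇑(hGH.eigenvectorBasis i) = 0 := by
      rw [Matrix.sub_mulVec, Matrix.smul_mulVec, Matrix.one_mulVec,
        hGH.mulVec_eigenvectorBasis]
      simp [hev]
    have hvne : ⇑(hGH.eigenvectorBasis i) ≠ 0 := by
      intro h
      exact hGH.eigenvectorBasis.orthonormal.ne_zero i (by ext x; exact congrFun h x)
    have hdet : (e i • (1 : Matrix (Fin 3) (Fin 3) ℝ) - G).det = 0 :=
      (Matrix.exists_mulVec_eq_zero_iff).mp ⟨_, hvne, hveq⟩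
    have hroot : (e i - l1) * ((e i - l2) * (e i - l3)) = 0 := by
      have h := eval_charpoly3 G (e i)
      rw [hchar, hdet] at h
      simpa [mul_assoc] using h.symm
    rcases mul_eq_zero.mp hroot with h | h
    · constructor <;> [linarith [sub_eq_zero.mp h]; linarith [sub_eq_zero.mp h]]
    · rcases mul_eq_zero.mp h with h' | h'
      · have := sub_eq_zero.mp h'
        constructor <;> linarith
      · have := sub_eq_zero.mp h'
        constructor <;> linarith
  -- trace of G
  have htrG : e 0 + e 1 + e 2 = l1 + l2 + l3 := by
    have h1 : G.trace = -(G.charpoly.coeff 2) := by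
      have := Matrix.trace_eq_neg_charpoly_coeff G
      simpa using this
    have h2 : ((X - C l1) * (X - C l2) * (X - C l3)).coeff 2 = -(l1 + l2 + l3) := by
      have hexp : (X - C l1) * (X - C l2) * (X - C l3) =
          X ^ 3 - C (l1 + l2 + l3) * X ^ 2 + C (l1 * l2 + l1 * l3 + l2 * l3) * X
            - C (l1 * l2 * l3) := by
        simp only [map_add, _root_.map_mul]
        ring
      rw [hexp]
      simp [coeff_X_pow, coeff_C, coeff_add, add_mul, coeff_C_mul]
    have h3 : G.trace = Matrix.trace (Matrix.diagonal e) := by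
      conv_lhs => rw [hspec]
      rw [Matrix.trace_mul_cycle, hUU', Matrix.one_mul]
    have h4 : Matrix.trace (Matrix.diagonal e) = e 0 + e 1 + e 2 := by
      rw [Matrix.trace_fin_three]
      simp
    rw [← h4, ← h3, h1, hchar, h2]
    ring
  -- trace (G * S) = Σ e i * T i i
  have htrGS : (G * S).trace = e 0 * T 0 0 + e 1 * T 1 1 + e 2 * T 2 2 := by
    have h1 : G * S = U * (Matrix.diagonal e * T) * star U := by
      rw [hspec, hT]
      calc U * Matrix.diagonal e * star U * S
          = U * (Matrix.diagonal e * (star U * (S * (U * star U)))) := by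
            rw [hUU, Matrix.mul_one]
            simp only [Matrix.mul_assoc]
        _ = U * (Matrix.diagonal e * (star U * S * U)) * star U := by
            simp only [Matrix.mul_assoc]
        _ = U * (Matrix.diagonal e * T) * star U := by rw [hT]
    rw [h1, Matrix.trace_mul_cycle, hUU', Matrix.one_mul]
    rw [Matrix.trace_fin_three]
    simp [Matrix.diagonal_mul]
  -- trace S = Σ T i i
  have htrS' : S.trace = T 0 0 + T 1 1 + T 2 2 := by
    rw [← htrT, Matrix.trace_fin_three]
  -- express finner and fnorm
  have hGt : Gᵀ = G := by
    have h := hGH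
    rwa [Matrix.IsHermitian, Matrix.conjTranspose_eq_transpose_of_trivial] at h
  have hfi : finner (G * E) E = (G * S).trace := by
    rw [finner, Matrix.transpose_mul, Matrix.mul_assoc, Matrix.trace_mul_comm, hGt]
    rw [hSdef, ← Matrix.mul_assoc, Matrix.trace_mul_comm]
  have hfn : fnorm E ^ 2 = S.trace := by
    have hnn : 0 ≤ finner E E := by
      rw [finner, Matrix.trace_fin_three]
      simp [Matrix.mul_apply, Fin.sum_univ_three, Matrix.transpose_apply]
      nlinarith [sq_nonneg (E 0 0), sq_nonneg (E 0 1), sq_nonneg (E 0 2), sq_nonneg (E 1 0),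
        sq_nonneg (E 1 1), sq_nonneg (E 1 2), sq_nonneg (E 2 0), sq_nonneg (E 2 1),
        sq_nonneg (E 2 2)]
    rw [fnorm, Real.sq_sqrt hnn, finner, Matrix.trace_mul_comm, hSdef]
  rw [hfi, hfn, htrGS, htrS']
  obtain ⟨he10, he30⟩ := heig_bound 0
  obtain ⟨he11, he31⟩ := heig_bound 1
  obtain ⟨he12, he32⟩ := heig_bound 2
  have hs0 := hTdiag_nonneg 0
  have hs1 := hTdiag_nonneg 1
  have hs2 := hTdiag_nonneg 2
  have hl0 := hTdiag_le 0
  have hl1 := hTdiag_le 1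
  have hl2 := hTdiag_le 2
  have hsumS : T 0 0 + T 1 1 + T 2 2 = 2 * (3 - t) := by rw [← htrS']; exact htrS
  constructor
  · nlinarith [mul_nonneg (sub_nonneg.mpr he30) (sub_nonneg.mpr hl0),
      mul_nonneg (sub_nonneg.mpr he31) (sub_nonneg.mpr hl1),
      mul_nonneg (sub_nonneg.mpr he32) (sub_nonneg.mpr hl2)]
  · nlinarith [mul_nonneg (sub_nonneg.mpr he10) (sub_nonneg.mpr hl0),
      mul_nonneg (sub_nonneg.mpr he11) (sub_nonneg.mpr hl1),
      mul_nonneg (sub_nonneg.mpr he12) (sub_nonneg.mpr hl2)]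
end
end

section
/- Let G be a real symmetric positive-semidefinite 3×3 matrix with eigenvalues λ₁ ≤ λ₂ ≤ λ₃, and let R, R̄ ∈ SO(3). Set E_R = R − R̄, c₁ = λ₁+λ₂ = tr(G) − λ₃, c₂ = λ₂+λ₃ = tr(G) − λ₁, and e_R = (RᵀGR̄ − R̄ᵀGR)^∨. Then ½·c₁²·(1 − ‖E_R‖²/8)·‖E_R‖² ≤ ‖e_R‖² ≤ ½·c₂²·‖E_R‖². -/
open Matrix Polynomial

noncomputable section

/-! ### Auxiliary lemmas -/

lemma aux_quad_nonneg {a b c d : ℝ} (hab : 0 ≤ a*b) (hac : 0 ≤ a*c) (had : 0 ≤ a*d)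
    (hsum : a + b + c + d = 4) : 0 ≤ a := by
  by_contra h
  push_neg at h
  have hb : b ≤ 0 := by nlinarith
  have hc : c ≤ 0 := by nlinarith
  have hd : d ≤ 0 := by nlinarith
  linarith

lemma aux_lower_final (AA BB CC DD T c1 : ℝ) (hsum : AA + BB + CC + DD = 4)
    (hT : (1/4)*(c1^2*(AA*BB)+c1^2*(AA*CC)+c1^2*(AA*DD)) ≤ T) :
    (1/2)*c1^2*(1 - (8-2*AA)/8)*(8-2*AA) ≤ T := by
  have h : (1/2)*c1^2*(1 - (8-2*AA)/8)*(8-2*AA)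
      = (1/4)*(c1^2*(AA*BB)+c1^2*(AA*CC)+c1^2*(AA*DD)) := by
    linear_combination -(c1^2*AA/4)*hsum
  linarith

lemma aux_upper_final (AA BB CC DD T c2 : ℝ) (hsum : AA + BB + CC + DD = 4)
    (hBC : 0 ≤ BB*CC) (hBD : 0 ≤ BB*DD) (hCD : 0 ≤ CC*DD)
    (hT : T ≤ (1/4)*(c2^2*(AA*BB)+c2^2*(AA*CC)+c2^2*(AA*DD)
      +c2^2*(CC*DD)+c2^2*(BB*DD)+c2^2*(BB*CC))) :
    T ≤ (1/2)*c2^2*(8-2*AA) := by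
  have hAA : AA = 4 - BB - CC - DD := by linarith
  subst hAA
  have hc2sq : (0:ℝ) ≤ c2^2 := sq_nonneg _
  have k1 := mul_nonneg hc2sq hBC
  have k2 := mul_nonneg hc2sq hBD
  have k3 := mul_nonneg hc2sq hCD
  have k4 := mul_nonneg hc2sq (sq_nonneg BB)
  have k5 := mul_nonneg hc2sq (sq_nonneg CC)
  have k6 := mul_nonneg hc2sq (sq_nonneg DD)
  nlinarith [k1,k2,k3,k4,k5,k6]

lemma aux_L_ineq (AA BB CC DD d0 d1 d2 c1 c2 eSq ESq : ℝ)
    (hsum : AA + BB + CC + DD = 4)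
    (hAB : 0 ≤ AA*BB) (hAC : 0 ≤ AA*CC) (hAD : 0 ≤ AA*DD)
    (hBC : 0 ≤ BB*CC) (hBD : 0 ≤ BB*DD) (hCD : 0 ≤ CC*DD)
    (heSq : eSq = (1/4)*((d1+d2)^2*(AA*BB)+(d2+d0)^2*(AA*CC)+(d0+d1)^2*(AA*DD)
      +(d1-d2)^2*(CC*DD)+(d2-d0)^2*(BB*DD)+(d0-d1)^2*(BB*CC)))
    (hESq : ESq = 8 - 2*AA)
    (hd0 : 0 ≤ d0) (hd1 : 0 ≤ d1) (hd2 : 0 ≤ d2) (hc1 : 0 ≤ c1)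
    (p01 : c1 ≤ d0 + d1) (p12 : c1 ≤ d1 + d2) (p02 : c1 ≤ d0 + d2)
    (q01 : d0 + d1 ≤ c2) (q12 : d1 + d2 ≤ c2) (q02 : d0 + d2 ≤ c2) :
    (1/2)*c1^2*(1 - ESq/8)*ESq ≤ eSq ∧ eSq ≤ (1/2)*c2^2*ESq := by
  subst hESq
  have s01 : c1^2 ≤ (d0+d1)^2 := pow_le_pow_left₀ hc1 p01 2
  have s12 : c1^2 ≤ (d1+d2)^2 := pow_le_pow_left₀ hc1 p12 2
  have s02 : c1^2 ≤ (d0+d2)^2 := pow_le_pow_left₀ hc1 p02 2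
  have t01 : (d0+d1)^2 ≤ c2^2 := pow_le_pow_left₀ (by linarith) q01 2
  have t12 : (d1+d2)^2 ≤ c2^2 := pow_le_pow_left₀ (by linarith) q12 2
  have t02 : (d0+d2)^2 ≤ c2^2 := pow_le_pow_left₀ (by linarith) q02 2
  have r01 : (d0-d1)^2 ≤ c2^2 := sq_le_sq' (by linarith) (by linarith)
  have r12 : (d1-d2)^2 ≤ c2^2 := sq_le_sq' (by linarith) (by linarith)
  have r02 : (d2-d0)^2 ≤ c2^2 := sq_le_sq' (by linarith) (by linarith)
  constructor
  · refine aux_lower_final AA BB CC DD eSq c1 hsum ?_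
    have e1 := mul_le_mul_of_nonneg_right s12 hAB
    have e2 := mul_le_mul_of_nonneg_right s02 hAC
    have e3 := mul_le_mul_of_nonneg_right s01 hAD
    have e4 : (0:ℝ) ≤ (d1-d2)^2*(CC*DD) := mul_nonneg (sq_nonneg _) hCD
    have e5 : (0:ℝ) ≤ (d2-d0)^2*(BB*DD) := mul_nonneg (sq_nonneg _) hBD
    have e6 : (0:ℝ) ≤ (d0-d1)^2*(BB*CC) := mul_nonneg (sq_nonneg _) hBC
    linarith [e1, e2, e3, e4, e5, e6]
  · refine aux_upper_final AA BB CC DD eSq c2 hsum hBC hBD hCD ?_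
    have u1 := mul_le_mul_of_nonneg_right t12 hAB
    have u2 := mul_le_mul_of_nonneg_right t02 hAC
    have u3 := mul_le_mul_of_nonneg_right t01 hAD
    have u4 := mul_le_mul_of_nonneg_right r12 hCD
    have u5 := mul_le_mul_of_nonneg_right r02 hBD
    have u6 := mul_le_mul_of_nonneg_right r01 hBC
    linarith [u1,u2,u3,u4,u5,u6]

lemma aux_so3_scalar (z00 z01 z02 z10 z11 z12 z20 z21 z22 : ℝ)
    (hr0 : z00^2+z01^2+z02^2 = 1) (hr1 : z10^2+z11^2+z12^2 = 1) (hr2 : z20^2+z21^2+z22^2 = 1)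
    (hc0 : z00^2+z10^2+z20^2 = 1) (hc1 : z01^2+z11^2+z21^2 = 1) (hc2 : z02^2+z12^2+z22^2 = 1)
    (ha0 : z00 = z11*z22 - z12*z21) (ha1 : z11 = z00*z22 - z02*z20) (ha2 : z22 = z00*z11 - z01*z10)
    (d0 d1 d2 : ℝ) :
    (1+z00+z11+z22)*(1+z00-z11-z22) = (z21-z12)^2 ∧
    (1+z00+z11+z22)*(1-z00+z11-z22) = (z02-z20)^2 ∧
    (1+z00+z11+z22)*(1-z00-z11+z22) = (z10-z01)^2 ∧
    (1-z00+z11-z22)*(1-z00-z11+z22) = (z12+z21)^2 ∧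
    (1+z00-z11-z22)*(1-z00-z11+z22) = (z20+z02)^2 ∧
    (1+z00-z11-z22)*(1-z00+z11-z22) = (z01+z10)^2 ∧
    ((d1*z12 - d2*z21)^2 + (d2*z20 - d0*z02)^2 + (d0*z01 - d1*z10)^2
      = (1/4)*((d1+d2)^2*((1+z00+z11+z22)*(1+z00-z11-z22))
        +(d2+d0)^2*((1+z00+z11+z22)*(1-z00+z11-z22))
        +(d0+d1)^2*((1+z00+z11+z22)*(1-z00-z11+z22))
        +(d1-d2)^2*((1-z00+z11-z22)*(1-z00-z11+z22))
        +(d2-d0)^2*((1+z00-z11-z22)*(1-z00-z11+z22))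
        +(d0-d1)^2*((1+z00-z11-z22)*(1-z00+z11-z22)))) := by
  refine ⟨?_, ?_, ?_, ?_, ?_, ?_, ?_⟩
  · linear_combination 2*ha0 - hr1 - hr2 + hc0
  · linear_combination 2*ha1 - hr0 - hr2 + hc1
  · linear_combination 2*ha2 - hr0 - hr1 + hc2
  · linear_combination -2*ha0 - hr1 - hr2 + hc0
  · linear_combination -2*ha1 - hr0 - hr2 + hc1
  · linear_combination -2*ha2 - hr0 - hr1 + hc2
  · linear_combination (-(1:ℝ)/4)*((d1+d2)^2*(2*ha0 - hr1 - hr2 + hc0)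
      + (d2+d0)^2*(2*ha1 - hr0 - hr2 + hc1)
      + (d0+d1)^2*(2*ha2 - hr0 - hr1 + hc2)
      + (d1-d2)^2*(-2*ha0 - hr1 - hr2 + hc0)
      + (d2-d0)^2*(-2*ha1 - hr0 - hr2 + hc1)
      + (d0-d1)^2*(-2*ha2 - hr0 - hr1 + hc2))
      - (1/2)*(d1^2-d2^2)*(hc1 - hr1) - (1/2)*(d2^2-d0^2)*(hr0 - hc0)

lemma finner_expand (A B : Matrix (Fin 3) (Fin 3) ℝ) :
    finner A B = A 0 0 * B 0 0 + A 0 1 * B 0 1 + A 0 2 * B 0 2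
      + A 1 0 * B 1 0 + A 1 1 * B 1 1 + A 1 2 * B 1 2
      + A 2 0 * B 2 0 + A 2 1 * B 2 1 + A 2 2 * B 2 2 := by
  simp [finner, Matrix.trace, Matrix.diag, Matrix.mul_apply, Fin.sum_univ_three,
    Matrix.transpose_apply]
  ring

lemma finner_self_nonneg (A : Matrix (Fin 3) (Fin 3) ℝ) : 0 ≤ finner A A := by
  rw [finner_expand]
  nlinarith [sq_nonneg (A 0 0), sq_nonneg (A 0 1), sq_nonneg (A 0 2), sq_nonneg (A 1 0),
    sq_nonneg (A 1 1), sq_nonneg (A 1 2), sq_nonneg (A 2 0), sq_nonneg (A 2 1), sq_nonneg (A 2 2)]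

lemma fnorm_sq (A : Matrix (Fin 3) (Fin 3) ℝ) : fnorm A ^ 2 = finner A A :=
  Real.sq_sqrt (finner_self_nonneg A)

lemma vnorm_sq {k : ℕ} (x : Fin k → ℝ) : vnorm x ^ 2 = x ⬝ᵥ x :=
  Real.sq_sqrt (Finset.sum_nonneg fun i _ => mul_self_nonneg (x i))

lemma vee_skew (K : Matrix (Fin 3) (Fin 3) ℝ) (hK : Kᵀ = -K) :
    2 * vnorm (vee K) ^ 2 = finner K K := by
  have h : ∀ i j, K i j = - K j i := by
    intro i j
    have := Matrix.ext_iff.2 hK j i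
    simpa using this
  rw [vnorm_sq, finner_expand]
  have hd : (vee K) ⬝ᵥ (vee K) = K 2 1^2 + K 0 2^2 + K 1 0^2 := by
    simp [vee, dotProduct, Fin.sum_univ_three]
    ring
  rw [hd]
  linear_combination (K 2 1 - K 1 2)*(h 2 1) + (K 0 2 - K 2 0)*(h 0 2)
    + (K 1 0 - K 0 1)*(h 1 0) - (K 0 0/2)*(h 0 0) - (K 1 1/2)*(h 1 1) - (K 2 2/2)*(h 2 2)

lemma finner_mul_left (V A B : Matrix (Fin 3) (Fin 3) ℝ) (hV : Vᵀ * V = 1) :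
    finner (V * A) (V * B) = finner A B := by
  unfold finner
  rw [Matrix.transpose_mul]
  rw [show Aᵀ * Vᵀ * (V * B) = Aᵀ * (Vᵀ * V) * B by noncomm_ring, hV, mul_one]

lemma finner_mul_right (V A B : Matrix (Fin 3) (Fin 3) ℝ) (hV : V * Vᵀ = 1) :
    finner (A * V) (B * V) = finner A B := by
  unfold finner
  rw [Matrix.transpose_mul]
  rw [show Vᵀ * Aᵀ * (B * V) = Vᵀ * (Aᵀ * B * V) by noncomm_ring,
    Matrix.trace_mul_comm, show Aᵀ * B * V * Vᵀ = Aᵀ * B * (V * Vᵀ) by noncomm_ring,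
    hV, mul_one]

lemma aux_charmatrix_diag (d : Fin 3 → ℝ) :
    charmatrix (Matrix.diagonal d) = Matrix.diagonal (fun i => (X : ℝ[X]) - C (d i)) := by
  ext i j
  by_cases h : i = j
  · subst h; simp [charmatrix_apply_eq]
  · simp [charmatrix_apply_ne _ _ _ h, Matrix.diagonal_apply_ne _ h, Matrix.diagonal_apply_ne d h]

lemma aux_charpoly_diag (d : Fin 3 → ℝ) :
    (Matrix.diagonal d).charpoly = (X - C (d 0)) * (X - C (d 1)) * (X - C (d 2)) := by
  rw [Matrix.charpoly, aux_charmatrix_diag, Matrix.det_diagonal, Fin.prod_univ_three]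

lemma aux_charpoly_conj (U A V : Matrix (Fin 3) (Fin 3) ℝ) (hUV : U * V = 1) :
    (U * A * V).charpoly = A.charpoly := by
  have hmap : ((C : ℝ →+* ℝ[X]).mapMatrix U) * ((C : ℝ →+* ℝ[X]).mapMatrix V) = 1 := by
    rw [← _root_.map_mul, hUV, _root_.map_one]
  have key : charmatrix (U*A*V) = (C : ℝ →+* ℝ[X]).mapMatrix U * charmatrix A
      * (C : ℝ →+* ℝ[X]).mapMatrix V := by
    unfold charmatrix
    rw [_root_.map_mul, _root_.map_mul, Matrix.mul_sub, Matrix.sub_mul]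
    congr 1
    rw [← (Matrix.scalar_commute (X : ℝ[X]) (fun r' => Commute.all _ r')
      ((C : ℝ →+* ℝ[X]).mapMatrix U)).eq, mul_assoc, hmap, mul_one]
  rw [Matrix.charpoly, Matrix.charpoly, key, Matrix.det_mul, Matrix.det_mul]
  have hdet : ((C : ℝ →+* ℝ[X]).mapMatrix U).det * ((C : ℝ →+* ℝ[X]).mapMatrix V).det = 1 := by
    rw [← Matrix.det_mul, hmap, Matrix.det_one]
  calc ((C : ℝ →+* ℝ[X]).mapMatrix U).det * (charmatrix A).det
        * ((C : ℝ →+* ℝ[X]).mapMatrix V).det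
      = (charmatrix A).det * (((C : ℝ →+* ℝ[X]).mapMatrix U).det
        * ((C : ℝ →+* ℝ[X]).mapMatrix V).det) := by ring
    _ = (charmatrix A).det := by rw [hdet, mul_one]

/-- Core bounds for `Z ∈ SO(3)` and a diagonal PSD matrix. -/
lemma aux_core (Z : Matrix (Fin 3) (Fin 3) ℝ) (hZo : Zᵀ * Z = 1) (hZdet : Z.det = 1)
    (d : Fin 3 → ℝ) (hd0 : 0 ≤ d 0) (hd1 : 0 ≤ d 1) (hd2 : 0 ≤ d 2) (c1 c2 : ℝ) (hc1 : 0 ≤ c1)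
    (p01 : c1 ≤ d 0 + d 1) (p12 : c1 ≤ d 1 + d 2) (p02 : c1 ≤ d 0 + d 2)
    (q01 : d 0 + d 1 ≤ c2) (q12 : d 1 + d 2 ≤ c2) (q02 : d 0 + d 2 ≤ c2) :
    (1/2)*c1^2*(1 - fnorm (Z - 1)^2/8)*fnorm (Z - 1)^2
      ≤ vnorm (vee (Zᵀ * Matrix.diagonal d - Matrix.diagonal d * Z))^2 ∧
    vnorm (vee (Zᵀ * Matrix.diagonal d - Matrix.diagonal d * Z))^2
      ≤ (1/2)*c2^2*fnorm (Z - 1)^2 := by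
  have hZZt : Z * Zᵀ = 1 := mul_eq_one_comm.mp hZo
  have ho := Matrix.ext_iff.2 hZo
  have ht := Matrix.ext_iff.2 hZZt
  have hC0 : Z 0 0^2 + Z 1 0^2 + Z 2 0^2 = 1 := by
    have := ho 0 0; simp [Matrix.mul_apply, Fin.sum_univ_three] at this; linear_combination this
  have hC1 : Z 0 1^2 + Z 1 1^2 + Z 2 1^2 = 1 := by
    have := ho 1 1; simp [Matrix.mul_apply, Fin.sum_univ_three] at this; linear_combination this
  have hC2 : Z 0 2^2 + Z 1 2^2 + Z 2 2^2 = 1 := by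
    have := ho 2 2; simp [Matrix.mul_apply, Fin.sum_univ_three] at this; linear_combination this
  have hR0 : Z 0 0^2 + Z 0 1^2 + Z 0 2^2 = 1 := by
    have := ht 0 0; simp [Matrix.mul_apply, Fin.sum_univ_three] at this; linear_combination this
  have hR1 : Z 1 0^2 + Z 1 1^2 + Z 1 2^2 = 1 := by
    have := ht 1 1; simp [Matrix.mul_apply, Fin.sum_univ_three] at this; linear_combination this
  have hR2 : Z 2 0^2 + Z 2 1^2 + Z 2 2^2 = 1 := by
    have := ht 2 2; simp [Matrix.mul_apply, Fin.sum_univ_three] at this; linear_combination this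
  have hadj : Z.adjugate = Zᵀ := by
    have h1 : Z.adjugate * Z = 1 := by rw [Matrix.adjugate_mul, hZdet, one_smul]
    calc Z.adjugate = Z.adjugate * (Z * Zᵀ) := by rw [hZZt, mul_one]
      _ = (Z.adjugate * Z) * Zᵀ := by rw [mul_assoc]
      _ = Zᵀ := by rw [h1, one_mul]
  have hA3 := Matrix.adjugate_fin_three Z
  rw [hadj] at hA3
  have ha0 : Z 0 0 = Z 1 1 * Z 2 2 - Z 1 2 * Z 2 1 := by
    have := Matrix.ext_iff.2 hA3 0 0; simpa using this
  have ha1 : Z 1 1 = Z 0 0 * Z 2 2 - Z 0 2 * Z 2 0 := by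
    have := Matrix.ext_iff.2 hA3 1 1; simpa using this
  have ha2 : Z 2 2 = Z 0 0 * Z 1 1 - Z 0 1 * Z 1 0 := by
    have := Matrix.ext_iff.2 hA3 2 2; simpa using this
  obtain ⟨P1, P2, P3, P4, P5, P6, PE⟩ := aux_so3_scalar (Z 0 0) (Z 0 1) (Z 0 2) (Z 1 0) (Z 1 1)
    (Z 1 2) (Z 2 0) (Z 2 1) (Z 2 2) hR0 hR1 hR2 hC0 hC1 hC2 ha0 ha1 ha2 (d 0) (d 1) (d 2)
  have heval : vnorm (vee (Zᵀ * Matrix.diagonal d - Matrix.diagonal d * Z))^2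
      = (d 1 * Z 1 2 - d 2 * Z 2 1)^2 + (d 2 * Z 2 0 - d 0 * Z 0 2)^2
        + (d 0 * Z 0 1 - d 1 * Z 1 0)^2 := by
    rw [vnorm_sq]
    simp [vee, dotProduct, Fin.sum_univ_three, Matrix.mul_apply, Matrix.sub_apply,
      Matrix.diagonal, Matrix.transpose_apply]
    ring
  have hEval2 : fnorm (Z - 1)^2 = 8 - 2*(1 + Z 0 0 + Z 1 1 + Z 2 2) := by
    rw [fnorm_sq, finner_expand]
    simp [Matrix.sub_apply, Matrix.one_apply]
    linear_combination hR0 + hR1 + hR2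
  rw [heval, hEval2]
  refine aux_L_ineq (1 + Z 0 0 + Z 1 1 + Z 2 2) (1 + Z 0 0 - Z 1 1 - Z 2 2)
    (1 - Z 0 0 + Z 1 1 - Z 2 2) (1 - Z 0 0 - Z 1 1 + Z 2 2) (d 0) (d 1) (d 2) c1 c2 _ _
    (by ring) ?_ ?_ ?_ ?_ ?_ ?_ ?_ rfl hd0 hd1 hd2 hc1 p01 p12 p02 q01 q12 q02
  · rw [P1]; exact sq_nonneg _
  · rw [P2]; exact sq_nonneg _
  · rw [P3]; exact sq_nonneg _
  · rw [P6]; exact sq_nonneg _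
  · rw [P5]; exact sq_nonneg _
  · rw [P4]; exact sq_nonneg _
  · exact PE

/-- bounds on the attitude error vector `e_R = (RᵀG Rbar − RbarᵀG R)^∨`:
`½ c₁² (1 − ‖E_R‖²/8) ‖E_R‖² ≤ ‖e_R‖² ≤ ½ c₂² ‖E_R‖²` with `c₁ = λ₁+λ₂ = tr G − λ₃`,
`c₂ = λ₂+λ₃ = tr G − λ₁`. -/
theorem stmt_6 (G : Matrix (Fin 3) (Fin 3) ℝ) (hG : G.PosSemidef)
    (l1 l2 l3 : ℝ) (h12 : l1 ≤ l2) (h23 : l2 ≤ l3)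
    (hchar : G.charpoly = (X - C l1) * (X - C l2) * (X - C l3))
    (R Rbar : Matrix (Fin 3) (Fin 3) ℝ) (hR : SO3 R) (hRbar : SO3 Rbar)
    (c₁ c₂ : ℝ) (hc₁ : c₁ = l1 + l2) (hc₂ : c₂ = l2 + l3)
    (eR : Fin 3 → ℝ) (heR : eR = vee (Rᵀ * G * Rbar - Rbarᵀ * G * R)) :
    (1 / 2) * c₁ ^ 2 * (1 - fnorm (R - Rbar) ^ 2 / 8) * fnorm (R - Rbar) ^ 2 ≤ vnorm eR ^ 2 ∧
    vnorm eR ^ 2 ≤ (1 / 2) * c₂ ^ 2 * fnorm (R - Rbar) ^ 2 := by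
  obtain ⟨hRo, hRdet⟩ := hR
  obtain ⟨hBo, hBdet⟩ := hRbar
  have hRRt : R * Rᵀ = 1 := mul_eq_one_comm.mp hRo
  have hBBt : Rbar * Rbarᵀ = 1 := mul_eq_one_comm.mp hBo
  -- spectral decomposition
  have hher := hG.1
  set U : Matrix (Fin 3) (Fin 3) ℝ := (hher.eigenvectorUnitary : Matrix (Fin 3) (Fin 3) ℝ)
    with hUdef
  set d : Fin 3 → ℝ := hher.eigenvalues with hddef
  have hspec : G = U * Matrix.diagonal d * Uᵀ := by
    conv_lhs => rw [hher.spectral_theorem]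
    simp [RCLike.ofReal_real_eq_id, Matrix.star_eq_conjTranspose,
      Matrix.conjTranspose_eq_transpose_of_trivial]
    rfl
  have hU1 : Uᵀ * U = 1 := by
    have := Matrix.mem_unitaryGroup_iff'.mp hher.eigenvectorUnitary.2
    rwa [Matrix.star_eq_conjTranspose, Matrix.conjTranspose_eq_transpose_of_trivial] at this
  have hU2 : U * Uᵀ = 1 := mul_eq_one_comm.mp hU1
  have hdnn : ∀ i, 0 ≤ d i := fun i => hG.eigenvalues_nonneg i
  -- eigenvalues are l1, l2, l3
  have hpoly : (X - C l1) * (X - C l2) * (X - C l3)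
      = (X - C (d 0)) * (X - C (d 1)) * (X - C (d 2)) := by
    rw [← hchar, hspec, aux_charpoly_conj U (Matrix.diagonal d) Uᵀ hU2, aux_charpoly_diag]
  have hev : ∀ x : ℝ, (x - l1)*(x - l2)*(x - l3) = (x - d 0)*(x - d 1)*(x - d 2) := by
    intro x
    have := congrArg (Polynomial.eval x) hpoly
    simpa using this
  have hmeml : ∀ x : ℝ, (x - l1)*(x - l2)*(x - l3) = 0 → l1 ≤ x ∧ x ≤ l3 := by
    intro x hx
    rcases mul_eq_zero.mp hx with h | h
    · rcases mul_eq_zero.mp h with h | h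
      · have := sub_eq_zero.mp h; constructor <;> linarith
      · have := sub_eq_zero.mp h; constructor <;> linarith
    · have := sub_eq_zero.mp h; constructor <;> linarith
  have hrange0 : l1 ≤ d 0 ∧ d 0 ≤ l3 := hmeml (d 0) (by rw [hev (d 0)]; ring)
  have hrange1 : l1 ≤ d 1 ∧ d 1 ≤ l3 := hmeml (d 1) (by rw [hev (d 1)]; ring)
  have hrange2 : l1 ≤ d 2 ∧ d 2 ≤ l3 := hmeml (d 2) (by rw [hev (d 2)]; ring)
  have hl1 : 0 ≤ l1 := by
    have h0 : (l1 - d 0)*(l1 - d 1)*(l1 - d 2) = 0 := by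
      rw [← hev l1]; ring
    rcases mul_eq_zero.mp h0 with h | h
    · rcases mul_eq_zero.mp h with h | h
      · have := sub_eq_zero.mp h; linarith [hdnn 0]
      · have := sub_eq_zero.mp h; linarith [hdnn 1]
    · have := sub_eq_zero.mp h; linarith [hdnn 2]
  have hsum : d 0 + d 1 + d 2 = l1 + l2 + l3 := by
    linear_combination (1/2)*(hev 1) + (1/2)*(hev (-1)) - hev 0
  -- the rotation Z
  set Z : Matrix (Fin 3) (Fin 3) ℝ := Uᵀ * R * Rbarᵀ * U with hZdef
  have cU : ∀ X : Matrix (Fin 3) (Fin 3) ℝ, U * (Uᵀ * X) = X := fun X => by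
    rw [← Matrix.mul_assoc, hU2, Matrix.one_mul]
  have cUt : ∀ X : Matrix (Fin 3) (Fin 3) ℝ, Uᵀ * (U * X) = X := fun X => by
    rw [← Matrix.mul_assoc, hU1, Matrix.one_mul]
  have cB : ∀ X : Matrix (Fin 3) (Fin 3) ℝ, Rbar * (Rbarᵀ * X) = X := fun X => by
    rw [← Matrix.mul_assoc, hBBt, Matrix.one_mul]
  have cBt : ∀ X : Matrix (Fin 3) (Fin 3) ℝ, Rbarᵀ * (Rbar * X) = X := fun X => by
    rw [← Matrix.mul_assoc, hBo, Matrix.one_mul]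
  have cR : ∀ X : Matrix (Fin 3) (Fin 3) ℝ, R * (Rᵀ * X) = X := fun X => by
    rw [← Matrix.mul_assoc, hRRt, Matrix.one_mul]
  have cRt : ∀ X : Matrix (Fin 3) (Fin 3) ℝ, Rᵀ * (R * X) = X := fun X => by
    rw [← Matrix.mul_assoc, hRo, Matrix.one_mul]
  have hZo : Zᵀ * Z = 1 := by
    rw [hZdef]
    simp only [Matrix.transpose_mul, Matrix.transpose_transpose, Matrix.mul_assoc,
      cU, cUt, cB, cBt, cR, cRt, hBo, hRo, hU1, hU2, hBBt, hRRt, Matrix.mul_one]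
  have hZdet : Z.det = 1 := by
    have hUU : U.det * U.det = 1 := by
      have := congrArg Matrix.det hU1
      simpa [Matrix.det_mul, Matrix.det_transpose] using this
    rw [hZdef]
    simp [Matrix.det_mul, Matrix.det_transpose, hRdet, hBdet]
    linear_combination hUU
  -- transporting the two quantities
  set D : Matrix (Fin 3) (Fin 3) ℝ := Matrix.diagonal d with hDdef
  set K : Matrix (Fin 3) (Fin 3) ℝ := Zᵀ * D - D * Z with hKdef
  set Pb : Matrix (Fin 3) (Fin 3) ℝ := Uᵀ * Rbar with hPbdef
  have hPb1 : Pbᵀ * Pb = 1 := by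
    rw [hPbdef]
    simp only [Matrix.transpose_mul, Matrix.transpose_transpose, Matrix.mul_assoc,
      cU, cUt, cB, cBt, cR, cRt, hBo, hRo, hU1, hU2, hBBt, hRRt, Matrix.mul_one]
  have hPb2 : Pb * Pbᵀ = 1 := mul_eq_one_comm.mp hPb1
  have hGsym : Gᵀ = G := by
    have := hG.1
    rwa [Matrix.IsHermitian, Matrix.conjTranspose_eq_transpose_of_trivial] at this
  have hDsym : Dᵀ = D := Matrix.diagonal_transpose d
  have hM : Rᵀ * G * Rbar - Rbarᵀ * G * R = Pbᵀ * K * Pb := by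
    rw [hKdef, hPbdef, hZdef, hspec]
    simp only [Matrix.transpose_mul, Matrix.transpose_transpose, Matrix.mul_sub,
      Matrix.sub_mul, Matrix.mul_assoc,
      cU, cUt, cB, cBt, cR, cRt, hBo, hRo, hU1, hU2, hBBt, hRRt, Matrix.mul_one]
  have hMskew : (Rᵀ * G * Rbar - Rbarᵀ * G * R)ᵀ = -(Rᵀ * G * Rbar - Rbarᵀ * G * R) := by
    simp only [Matrix.transpose_sub, Matrix.transpose_mul, Matrix.transpose_transpose, hGsym,
      Matrix.mul_assoc, neg_sub]
  have hKskew : Kᵀ = -K := by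
    rw [hKdef]
    simp only [Matrix.transpose_sub, Matrix.transpose_mul, Matrix.transpose_transpose, hDsym]
    rw [neg_sub]
  have hn1 : vnorm eR ^ 2 = vnorm (vee K) ^ 2 := by
    have h1 := vee_skew (Rᵀ * G * Rbar - Rbarᵀ * G * R) hMskew
    have h2 := vee_skew K hKskew
    have h3 : finner (Rᵀ * G * Rbar - Rbarᵀ * G * R) (Rᵀ * G * Rbar - Rbarᵀ * G * R)
        = finner K K := by
      rw [hM]
      have e1 : Pbᵀ * K * Pb = (Pbᵀ * K) * Pb := by rw [Matrix.mul_assoc]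
      rw [e1, finner_mul_right Pb (Pbᵀ * K) (Pbᵀ * K) hPb2,
        finner_mul_left Pbᵀ K K (by rw [Matrix.transpose_transpose]; exact hPb2)]
    rw [heR]
    linarith [h1, h2, h3]
  have hn2 : fnorm (R - Rbar) ^ 2 = fnorm (Z - 1) ^ 2 := by
    have hZm : Z - 1 = Uᵀ * ((R - Rbar) * (Rbarᵀ * U)) := by
      rw [hZdef, Matrix.sub_mul, Matrix.mul_sub]
      simp only [Matrix.mul_assoc, cU, cUt, cB, cBt, cR, cRt, hBo, hRo, hU1, hU2, hBBt, hRRt,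
        Matrix.mul_one]
    rw [fnorm_sq, fnorm_sq, hZm, show Uᵀ * ((R - Rbar) * (Rbarᵀ * U))
        = Uᵀ * ((R - Rbar) * (Rbarᵀ * U)) from rfl,
      finner_mul_left Uᵀ _ _ (by rw [Matrix.transpose_transpose]; exact hU2),
      finner_mul_right (Rbarᵀ * U) _ _ (by
        simp only [Matrix.transpose_mul, Matrix.transpose_transpose, Matrix.mul_assoc,
          cU, cUt, cB, cBt, cR, cRt, hBo, hRo, hU1, hU2, hBBt, hRRt, Matrix.mul_one])]
  -- pair sum bounds
  have hb01 : c₁ ≤ d 0 + d 1 := by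
    have := hrange2.2; rw [hc₁]; linarith
  have hb12 : c₁ ≤ d 1 + d 2 := by
    have := hrange0.2; rw [hc₁]; linarith
  have hb02 : c₁ ≤ d 0 + d 2 := by
    have := hrange1.2; rw [hc₁]; linarith
  have hq01 : d 0 + d 1 ≤ c₂ := by
    have := hrange2.1; rw [hc₂]; linarith
  have hq12 : d 1 + d 2 ≤ c₂ := by
    have := hrange0.1; rw [hc₂]; linarith
  have hq02 : d 0 + d 2 ≤ c₂ := by
    have := hrange1.1; rw [hc₂]; linarith
  have hc1nn : 0 ≤ c₁ := by rw [hc₁]; linarith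
  rw [hn1, hn2]
  exact aux_core Z hZo hZdet d (hdnn 0) (hdnn 1) (hdnn 2) c₁ c₂ hc1nn
    hb01 hb12 hb02 hq01 hq12 hq02
end
end

section
/- For every Q ∈ SO(3) and every x ∈ ℝ³, xᵀ(tr(Q)·I₃ − Q)x ≥ 2·(1 − ‖I₃−Q‖²/4)·‖x‖². -/
open Matrix Polynomial

noncomputable section

lemma dotProduct_self_nonneg {k : ℕ} (x : Fin k → ℝ) : 0 ≤ x ⬝ᵥ x :=
  Finset.sum_nonneg fun j _ => mul_self_nonneg _

/-- for `Q ∈ SO(3)` and `x ∈ ℝ³`,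
`xᵀ(tr(Q) I₃ − Q) x ≥ 2 (1 − ‖I₃ − Q‖²/4) ‖x‖²`. -/
theorem stmt_7 (Q : Matrix (Fin 3) (Fin 3) ℝ) (hQ : SO3 Q) (x : Fin 3 → ℝ) :
    x ⬝ᵥ (Q.trace • (1 : Matrix (Fin 3) (Fin 3) ℝ) - Q).mulVec x ≥
      2 * (1 - fnorm (1 - Q) ^ 2 / 4) * vnorm x ^ 2 := by
  have hfn : fnorm (1 - Q) ^ 2 = 6 - 2 * Q.trace := by
    have h1 : finner (1 - Q) (1 - Q) = 6 - 2 * Q.trace := by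
      unfold finner
      have : (1 - Q)ᵀ * (1 - Q) = 1 - Q - Qᵀ + Qᵀ * Q := by
        simp [Matrix.sub_mul, Matrix.mul_sub, Matrix.transpose_sub]
        noncomm_ring
      rw [this, hQ.1]
      simp [Matrix.trace_sub, Matrix.trace_transpose]
      ring
    rw [fnorm, Real.sq_sqrt (finner_self_nonneg _), h1]
  have hvn : vnorm x ^ 2 = x ⬝ᵥ x := by
    rw [vnorm, Real.sq_sqrt (dotProduct_self_nonneg x)]
  have hQx : Q.mulVec x ⬝ᵥ Q.mulVec x = x ⬝ᵥ x := by
    have h1 : Q *ᵥ x = x ᵥ* Qᵀ := (Matrix.vecMul_transpose Q x).symm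
    rw [Matrix.dotProduct_mulVec, h1, Matrix.vecMul_vecMul, hQ.1, Matrix.vecMul_one]
  have hkey : 0 ≤ (x - Q.mulVec x) ⬝ᵥ (x - Q.mulVec x) := dotProduct_self_nonneg _
  have hexp : (x - Q.mulVec x) ⬝ᵥ (x - Q.mulVec x) =
      x ⬝ᵥ x - 2 * (x ⬝ᵥ Q.mulVec x) + Q.mulVec x ⬝ᵥ Q.mulVec x := by
    rw [sub_dotProduct, dotProduct_sub, dotProduct_sub,
      dotProduct_comm (Q.mulVec x) x]
    ring
  have hLHS : x ⬝ᵥ (Q.trace • (1 : Matrix (Fin 3) (Fin 3) ℝ) - Q).mulVec x =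
      Q.trace * (x ⬝ᵥ x) - x ⬝ᵥ Q.mulVec x := by
    rw [Matrix.sub_mulVec, dotProduct_sub, Matrix.smul_mulVec,
      Matrix.one_mulVec, dotProduct_smul]
    simp [smul_eq_mul]
  rw [hfn, hvn, hLHS]
  nlinarith [hkey, hexp, hQx, dotProduct_self_nonneg x]
end
end

section
/- Let G be a real symmetric 3×3 matrix, R, R̄ ∈ SO(3), and set Q = R·R̄ᵀ. Then the attitude error vector e_R = (RᵀGR̄ − R̄ᵀGR)^∨ satisfies ‖e_R‖² = ½·‖G·Qᵀ − Q·G‖², where the norm on the right is the Frobenius norm. -/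
open Matrix Polynomial

noncomputable section

/-- with `Q = R Rbarᵀ`, the attitude error vector
`e_R = (RᵀG Rbar − RbarᵀG R)^∨` satisfies `‖e_R‖² = ½ ‖G Qᵀ − Q G‖²`. -/
theorem stmt_10 (G : Matrix (Fin 3) (Fin 3) ℝ) (hG : Gᵀ = G)
    (R Rbar : Matrix (Fin 3) (Fin 3) ℝ) (hR : SO3 R) (hRbar : SO3 Rbar)
    (Q : Matrix (Fin 3) (Fin 3) ℝ) (hQ : Q = R * Rbarᵀ)
    (eR : Fin 3 → ℝ) (heR : eR = vee (Rᵀ * G * Rbar - Rbarᵀ * G * R)) :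
    vnorm eR ^ 2 = (1 / 2) * fnorm (G * Qᵀ - Q * G) ^ 2 := by
  obtain ⟨hR1, -⟩ := hR
  have hRR : R * Rᵀ = 1 := mul_eq_one_comm.mp hR1
  set A : Matrix (Fin 3) (Fin 3) ℝ := Rᵀ * G * Rbar - Rbarᵀ * G * R with hA
  -- A is skew-symmetric
  have hskew : Aᵀ = -A := by
    rw [hA]
    simp only [Matrix.transpose_sub, Matrix.transpose_mul, Matrix.transpose_transpose, hG]
    noncomm_ring
  have hij : ∀ i j, A i j = -A j i := by
    intro i j
    have := congrFun (congrFun hskew j) i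
    simpa [Matrix.transpose_apply] using this
  -- G Qᵀ - Q G = R A Rᵀ
  have hM : G * Qᵀ - Q * G = R * A * Rᵀ := by
    subst hQ
    have h1 : R * A * Rᵀ
        = (R * Rᵀ) * (G * (Rbar * Rᵀ)) - (R * Rbarᵀ * G) * (R * Rᵀ) := by
      rw [hA]; noncomm_ring
    rw [h1, hRR, one_mul, mul_one]
    simp [Matrix.transpose_mul, Matrix.mul_assoc]
  -- conjugation by R preserves the Frobenius inner product
  have htr : finner (G * Qᵀ - Q * G) (G * Qᵀ - Q * G) = (Aᵀ * A).trace := by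
    rw [finner, hM]
    have h2 : (R * A * Rᵀ)ᵀ * (R * A * Rᵀ) = R * (Aᵀ * (Rᵀ * R) * A) * Rᵀ := by
      simp only [Matrix.transpose_mul, Matrix.transpose_transpose]; noncomm_ring
    rw [h2, hR1, mul_one, Matrix.trace_mul_cycle, ← Matrix.mul_assoc, hR1, one_mul]
  -- trace of AᵀA for skew A
  have hAA : (Aᵀ * A).trace = 2 * (A 2 1 ^ 2 + A 0 2 ^ 2 + A 1 0 ^ 2) := by
    have z0 : A 0 0 = 0 := by have := hij 0 0; linarith
    have z1 : A 1 1 = 0 := by have := hij 1 1; linarith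
    have z2 : A 2 2 = 0 := by have := hij 2 2; linarith
    simp only [Matrix.trace, Matrix.diag, Matrix.mul_apply, Matrix.transpose_apply,
      Fin.sum_univ_three, z0, z1, z2, hij 2 0, hij 0 1, hij 1 2]
    ring
  -- left-hand side
  have hv : vnorm eR ^ 2 = A 2 1 ^ 2 + A 0 2 ^ 2 + A 1 0 ^ 2 := by
    have hd : eR ⬝ᵥ eR = A 2 1 ^ 2 + A 0 2 ^ 2 + A 1 0 ^ 2 := by
      rw [heR]
      simp [vee, dotProduct, Fin.sum_univ_three, ← hA]
      ring
    rw [vnorm, hd, Real.sq_sqrt (by positivity)]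
  -- right-hand side
  have hf : fnorm (G * Qᵀ - Q * G) ^ 2 = 2 * (A 2 1 ^ 2 + A 0 2 ^ 2 + A 1 0 ^ 2) := by
    rw [fnorm, Real.sq_sqrt (by rw [htr, hAA]; positivity), htr, hAA]
  rw [hv, hf]
  ring
end
end

section
/- Let G be a real symmetric 3×3 matrix, θ ∈ ℝ, and Q = I₃ + sin(θ)·ê₃ + (1−cos(θ))·ê₃² (the rotation by angle θ about e₃ = (0,0,1)). Then ‖G(I₃ − Qᵀ)‖² = 2·(tr(G²) − ‖G e₃‖²)·(1 − cos θ). -/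
open Matrix Polynomial

noncomputable section

/-- for symmetric `G` and `Q` the rotation by angle `θ` about `e₃`,
`‖G(I₃ − Qᵀ)‖² = 2 (tr(G²) − ‖G e₃‖²)(1 − cos θ)`. -/
theorem stmt_11 (G : Matrix (Fin 3) (Fin 3) ℝ) (hG : Gᵀ = G) (θ : ℝ)
    (Q : Matrix (Fin 3) (Fin 3) ℝ)
    (hQ : Q = 1 + Real.sin θ • hat e3 + (1 - Real.cos θ) • (hat e3 * hat e3)) :
    fnorm (G * (1 - Qᵀ)) ^ 2 = 2 * ((G * G).trace - vnorm (G.mulVec e3) ^ 2) * (1 - Real.cos θ) := by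
  have h01 : G 1 0 = G 0 1 := congrFun (congrFun hG 0) 1
  have h02 : G 2 0 = G 0 2 := congrFun (congrFun hG 0) 2
  have h12 : G 2 1 = G 1 2 := congrFun (congrFun hG 1) 2
  have hsc := Real.sin_sq_add_cos_sq θ
  have hf : finner (G * (1 - Qᵀ)) (G * (1 - Qᵀ)) =
      2 * ((G * G).trace - (G.mulVec e3 ⬝ᵥ G.mulVec e3)) * (1 - Real.cos θ) := by
    simp [finner, hQ, Matrix.trace, Matrix.mul_apply, Matrix.transpose_apply,
      Fin.sum_univ_three, hat, e3, Matrix.mulVec, dotProduct, Matrix.one_apply,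
      Matrix.vecHead, Matrix.vecTail, Matrix.cons_val_zero, Matrix.cons_val_one,
      h01, h02, h12]
    linear_combination (G 0 0 ^ 2 + 2 * G 0 1 ^ 2 + G 0 2 ^ 2 + G 1 1 ^ 2 + G 1 2 ^ 2) * hsc
  have hnn : 0 ≤ finner (G * (1 - Qᵀ)) (G * (1 - Qᵀ)) := by
    simp only [finner, Matrix.trace, Matrix.mul_apply, Matrix.transpose_apply,
      Fin.sum_univ_three, Matrix.diag_apply, ← sq]
    positivity
  have hvn : vnorm (G.mulVec e3) ^ 2 = G.mulVec e3 ⬝ᵥ G.mulVec e3 := by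
    rw [vnorm, Real.sq_sqrt]
    simp only [dotProduct, Fin.sum_univ_three, ← sq]
    positivity
  rw [fnorm, Real.sq_sqrt hnn, hf, hvn]
end
end

section
/- Let G be a real symmetric 3×3 matrix with entries Gᵢⱼ, θ ∈ ℝ, and Q = I₃ + sin(θ)·ê₃ + (1−cos(θ))·ê₃² (the rotation by angle θ about e₃ = (0,0,1)). Then ½·‖G·Qᵀ − Q·G‖² = 2(1−cos θ)·[ G₁₃² + G₂₃² + (G₁₁+G₂₂)²·(1 − (1−cos θ)/2) ]. Equivalently, writing E = I₃ − Q so that ‖E‖² = 4(1−cos θ), one has 2·(½‖GQᵀ−QG‖²)/‖E‖² = G₁₃² + G₂₃² + (G₁₁+G₂₂)²·(1 − ‖E‖²/8) whenever θ is not a multiple of 2π. -/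
open Matrix Polynomial

noncomputable section

/-- for symmetric `G` and `Q` the rotation by angle `θ` about `e₃`,
`½‖G Qᵀ − Q G‖² = 2(1 − cos θ)[G₁₃² + G₂₃² + (G₁₁+G₂₂)²(1 − (1−cos θ)/2)]`; equivalently,
with `E = I₃ − Q` (so `‖E‖² = 4(1 − cos θ)`), whenever `θ` is not a multiple of `2π`,
`2 (½‖G Qᵀ − Q G‖²)/‖E‖² = G₁₃² + G₂₃² + (G₁₁+G₂₂)²(1 − ‖E‖²/8)`. -/
theorem stmt_12 (G : Matrix (Fin 3) (Fin 3) ℝ) (hG : Gᵀ = G) (θ : ℝ)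
    (Q : Matrix (Fin 3) (Fin 3) ℝ)
    (hQ : Q = 1 + Real.sin θ • hat e3 + (1 - Real.cos θ) • (hat e3 * hat e3)) :
    ((1 / 2) * fnorm (G * Qᵀ - Q * G) ^ 2 =
      2 * (1 - Real.cos θ) *
        (G 0 2 ^ 2 + G 1 2 ^ 2 + (G 0 0 + G 1 1) ^ 2 * (1 - (1 - Real.cos θ) / 2))) ∧
    ((¬ ∃ k : ℤ, θ = k * (2 * Real.pi)) →
      2 * ((1 / 2) * fnorm (G * Qᵀ - Q * G) ^ 2) / fnorm (1 - Q) ^ 2 =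
        G 0 2 ^ 2 + G 1 2 ^ 2 + (G 0 0 + G 1 1) ^ 2 * (1 - fnorm (1 - Q) ^ 2 / 8)) := by
  have h10 : G 1 0 = G 0 1 := by
    have := congrFun (congrFun hG 1) 0; simpa using this.symm
  have h20 : G 2 0 = G 0 2 := by
    have := congrFun (congrFun hG 2) 0; simpa using this.symm
  have h21 : G 2 1 = G 1 2 := by
    have := congrFun (congrFun hG 2) 1; simpa using this.symm
  have part1 : (1 / 2) * fnorm (G * Qᵀ - Q * G) ^ 2 =
      2 * (1 - Real.cos θ) *
        (G 0 2 ^ 2 + G 1 2 ^ 2 + (G 0 0 + G 1 1) ^ 2 * (1 - (1 - Real.cos θ) / 2)) := by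
    rw [fnorm_sq]
    subst hQ
    simp only [finner, Matrix.trace, Matrix.diag, Fin.sum_univ_three, Matrix.mul_apply,
      Matrix.sub_apply, Matrix.add_apply, Matrix.smul_apply, Matrix.transpose_apply,
      Matrix.one_fin_three, hat, e3, smul_eq_mul, Matrix.cons_val', Matrix.cons_val_zero,
      Matrix.cons_val_one, Matrix.head_cons, Matrix.empty_val', Matrix.cons_val_fin_one,
      Matrix.head_fin_const, Matrix.cons_val_two, Matrix.tail_cons, Matrix.of_apply]
    norm_num [h10, h20, h21]
    linear_combination ((G 0 0 + G 1 1) ^ 2 + G 0 2 ^ 2 + G 1 2 ^ 2) *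
      Real.sin_sq_add_cos_sq θ
  have hE : fnorm (1 - Q) ^ 2 = 4 * (1 - Real.cos θ) := by
    rw [fnorm_sq]
    subst hQ
    simp only [finner, Matrix.trace, Matrix.diag, Fin.sum_univ_three, Matrix.mul_apply,
      Matrix.sub_apply, Matrix.add_apply, Matrix.smul_apply, Matrix.transpose_apply,
      Matrix.one_fin_three, hat, e3, smul_eq_mul, Matrix.cons_val', Matrix.cons_val_zero,
      Matrix.cons_val_one, Matrix.head_cons, Matrix.empty_val', Matrix.cons_val_fin_one,
      Matrix.head_fin_const, Matrix.cons_val_two, Matrix.tail_cons, Matrix.of_apply]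
    norm_num
    linear_combination 2 * Real.sin_sq_add_cos_sq θ
  refine ⟨part1, fun hk => ?_⟩
  have hc : Real.cos θ ≠ 1 := by
    intro h
    rcases Real.cos_eq_one_iff θ |>.mp h with ⟨n, hn⟩
    exact hk ⟨n, hn.symm⟩
  have h1c : (1 : ℝ) - Real.cos θ ≠ 0 := sub_ne_zero.mpr (Ne.symm hc)
  rw [part1, hE]
  field_simp
  ring
end
end

section
/- Let s₁, …, sₙ ∈ ℝ³, let w₁, …, wₙ be real weights, set G = Σᵢ wᵢ·sᵢ·sᵢᵀ, and let R, R̄ ∈ SO(3). Then the attitude error vector satisfies (RᵀGR̄ − R̄ᵀGR)^∨ = Σᵢ wᵢ·(R̄ᵀsᵢ) × (Rᵀsᵢ). -/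
open Matrix Polynomial

noncomputable section

/-- for `G = Σᵢ wᵢ sᵢ sᵢᵀ` and `R, Rbar ∈ SO(3)`,
`(RᵀG Rbar − RbarᵀG R)^∨ = Σᵢ wᵢ (Rbarᵀsᵢ) × (Rᵀsᵢ)`. -/
theorem stmt_15 {n : ℕ} (s : Fin n → Fin 3 → ℝ) (w : Fin n → ℝ)
    (G : Matrix (Fin 3) (Fin 3) ℝ) (hG : G = ∑ i, w i • vecMulVec (s i) (s i))
    (R Rbar : Matrix (Fin 3) (Fin 3) ℝ) (hR : SO3 R) (hRbar : SO3 Rbar) :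
    vee (Rᵀ * G * Rbar - Rbarᵀ * G * R) =
      ∑ i, w i • crossProduct (Rbarᵀ.mulVec (s i)) (Rᵀ.mulVec (s i)) := by
  subst hG
  funext j
  fin_cases j <;>
  · simp only [vee, Matrix.sum_mul, Matrix.mul_sum, Matrix.sub_apply, Matrix.sum_apply,
      Finset.sum_apply, ← Finset.sum_sub_distrib, Fin.zero_eta, Fin.mk_one, Fin.reduceFinMk,
      Matrix.cons_val_zero, Matrix.cons_val_one, Matrix.head_cons, Matrix.cons_val_two,
      Matrix.tail_cons]
    refine Finset.sum_congr rfl fun i _ => ?_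
    simp [Matrix.mul_apply, Matrix.smul_mul, Matrix.mul_smul, vecMulVec_apply,
      Fin.sum_univ_three, Matrix.mulVec, dotProduct, crossProduct, Matrix.transpose_apply]
    ring
end
end
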